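/- Let r be a W-valued 1-form on ℝ^{2n}, D = −δ + d + (i/ℏ)[r,·], and suppose the curvature Ω := ω + δr − dr − (i/ℏ) r⋆r has all coefficients independent of the y-variables, i.e. D is an Abelian connection with Weyl curvature Ω ∈ Ω^2(ℝ^{2n},ℂ)[[ℏ]]. With K_0 = −( Er − iℏ·∂r/∂ℏ + i r + (i/2) Σ_{i,j} ω_{ij} y^i dx^j ), one has D K_0 = i( Ω − ℏ·∂Ω/∂ℏ ) = −iℏ^2·∂(ℏ^{−1}Ω)/∂ℏ. -/

import Mathlib

/-!  Common definitions: formal Weyl algebras, Moyal products, Weyl-bundle valued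
differential forms on ℝ^{2n}, Fedosov connections, star-products on smooth functions,
multidifferential operators and Hochschild coboundaries.  -/

noncomputable section
namespace StarPaper

open scoped BigOperators

/-! ### Formal power series in y -/

/-- The fiber coefficient ring `ℂ[[y^1, …, y^N]]`. -/
abbrev Wc (N : ℕ) := MvPowerSeries (Fin N) ℂ

/-- Build a formal power series from its coefficient function. -/
def Wc.mk {N : ℕ} (f : (Fin N →₀ ℕ) → ℂ) : Wc N := f

/-- Formal partial derivative `∂/∂y^i` on `ℂ[[y]]`. -/
def yD {N : ℕ} (i : Fin N) (a : Wc N) : Wc N :=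
  Wc.mk fun β => ((β i : ℂ) + 1) * MvPowerSeries.coeff (β + Finsupp.single i 1) a

/-- Formal iterated partial derivative `∂^α` on `ℂ[[y]]`. -/
def yDM {N : ℕ} (α : Fin N →₀ ℕ) (a : Wc N) : Wc N :=
  Wc.mk fun β =>
    (∏ i : Fin N, (((β i + α i).factorial : ℂ) / ((β i).factorial : ℂ))) *
      MvPowerSeries.coeff (β + α) a

/-- Iterated derivatives along a tuple of directions. -/
def iterD {R : Type*} {N : ℕ} (D : Fin N → R → R) : {k : ℕ} → (Fin k → Fin N) → R → R
  | 0, _, a => a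
  | _ + 1, v, a => D (v 0) (iterD D (fun t => v t.succ) a)

/-- The `k`-th term of the Moyal–Weyl product for a constant matrix `π`:
`((-iℏ/2)^k/k!) Σ π^{i₁j₁}⋯π^{i_kj_k} (∂^k a/∂y^{i₁}⋯) (∂^k b/∂y^{j₁}⋯)`. -/
def moyalTerm {R : Type*} [CommRing R] [Module ℂ R] {N : ℕ}
    (D : Fin N → R → R) (π : Matrix (Fin N) (Fin N) ℂ) (k : ℕ) (a b : R) : R :=
  ((-Complex.I / 2) ^ k / (Nat.factorial k : ℂ)) •
    ∑ i : Fin k → Fin N, ∑ j : Fin k → Fin N,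
      (∏ t, π (i t) (j t)) • (iterD D i a * iterD D j b)

/-- Moyal product on formal power series `Σ_m ℏ^m F_m` (coefficients `F : ℕ → R`). -/
def moyalN {R : Type*} [CommRing R] [Module ℂ R] {N : ℕ} (D : Fin N → R → R)
    (π : Matrix (Fin N) (Fin N) ℂ) (F G : ℕ → R) : ℕ → R :=
  fun m => ∑ k ∈ Finset.range (m + 1), ∑ l ∈ Finset.range (m - k + 1),
    moyalTerm D π k (F l) (G (m - k - l))

/-- Moyal product on formal Laurent series `Σ_m ℏ^m F_m` (coefficients `F : ℤ → R`);
the sum over contributions is finite for series bounded below in `ℏ`-degree. -/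
def moyalZ {R : Type*} [CommRing R] [Module ℂ R] {N : ℕ} (D : Fin N → R → R)
    (π : Matrix (Fin N) (Fin N) ℂ) (F G : ℤ → R) : ℤ → R :=
  fun m => ∑ᶠ p : ℕ × ℤ, moyalTerm D π p.1 (F p.2) (G (m - p.1 - p.2))

/-- Moyal term for an `ℏ`-dependent matrix `π(ℏ) = π₀ + ℏπ₁`: the part of the `k`-th
Moyal term in which the product of matrix entries contributes `ℏ^d`. -/
def moyalTermH {R : Type*} [CommRing R] [Module ℂ R] {N : ℕ} (D : Fin N → R → R)
    (π0 π1 : Matrix (Fin N) (Fin N) ℂ) (k d : ℕ) (a b : R) : R :=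
  ((-Complex.I / 2) ^ k / (Nat.factorial k : ℂ)) •
    ∑ i : Fin k → Fin N, ∑ j : Fin k → Fin N,
      (∑ T ∈ Finset.univ.powerset.filter (fun T : Finset (Fin k) => T.card = d),
          (∏ t ∈ T, π1 (i t) (j t)) * ∏ t ∈ Tᶜ, π0 (i t) (j t)) •
        (iterD D i a * iterD D j b)

/-- Moyal product built from the `ℏ`-dependent matrix `π(ℏ) = π₀ + ℏπ₁`. -/
def moyalNH {R : Type*} [CommRing R] [Module ℂ R] {N : ℕ} (D : Fin N → R → R)
    (π0 π1 : Matrix (Fin N) (Fin N) ℂ) (F G : ℕ → R) : ℕ → R :=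
  fun m => ∑ k ∈ Finset.range (m + 1), ∑ d ∈ Finset.range (m - k + 1),
    ∑ l ∈ Finset.range (m - k - d + 1),
      moyalTermH D π0 π1 k d (F l) (G (m - k - d - l))

/-- The standard Poisson matrix `π` on `ℝ^{2n}` (inverse of the standard symplectic
matrix `ω`, normalized by `Σ_m ω_{jm} π^{mn} = δ_j^n`). -/
def stdPi (n : ℕ) : Matrix (Fin (2 * n)) (Fin (2 * n)) ℂ :=
  Matrix.of fun i j =>
    if (i : ℕ) + n = (j : ℕ) then 1 else if (j : ℕ) + n = (i : ℕ) then -1 else 0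

/-- The standard symplectic matrix `ω_{ij}`. -/
def stdOmega (n : ℕ) : Matrix (Fin (2 * n)) (Fin (2 * n)) ℂ := -stdPi n

/-! ### The formal Weyl algebra `W = ℂ[[y,ℏ]]` -/

/-- The formal Weyl algebra as `ℏ`-coefficient sequences. -/
abbrev Wa (N : ℕ) := ℕ → Wc N

/-- Moyal–Weyl product on `W` for a constant matrix `π`. -/
def wmulPi {N : ℕ} (π : Matrix (Fin N) (Fin N) ℂ) (a b : Wa N) : Wa N := moyalN yD π a b

/-- Moyal–Weyl product on `W` for the standard symplectic Poisson matrix. -/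
def wmul {n : ℕ} (a b : Wa (2 * n)) : Wa (2 * n) := wmulPi (stdPi n) a b

/-- The unit `1 ∈ W`. -/
def oneW (N : ℕ) : Wa N := fun m => if m = 0 then 1 else 0

/-- Scalar multiplication by a formal power series `s ∈ ℂ[[ℏ]]` (given by its
coefficients `s : ℕ → ℂ`). -/
def hsmul {N : ℕ} (s : ℕ → ℂ) (a : Wa N) : Wa N :=
  fun m => ∑ l ∈ Finset.range (m + 1), s l • a (m - l)

/-- The operator `E = -(i/2) Σ_j y^j ∂/∂y^j` on `ℂ[[y]]`. -/
def EulW {N : ℕ} (a : Wc N) : Wc N :=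
  Wc.mk fun β => -Complex.I / 2 * (∑ i : Fin N, (β i : ℂ)) * MvPowerSeries.coeff β a

/-- `E` on the Weyl algebra, acting on each `ℏ`-coefficient. -/
def EulWa {N : ℕ} (a : Wa N) : Wa N := fun m => EulW (a m)

/-- Termwise derivative `∂/∂ℏ`. -/
def hD {N : ℕ} (a : Wa N) : Wa N := fun m => (((m + 1 : ℕ) : ℂ)) • a (m + 1)

/-- Multiplication by `ℏ`. -/
def hM {N : ℕ} (a : Wa N) : Wa N := fun m => match m with
  | 0 => 0
  | Nat.succ m' => a m'

/-- Division by `ℏ` (exact on elements divisible by `ℏ`; discards the constant term). -/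
def hInv {N : ℕ} (a : Wa N) : Wa N := fun m => a (m + 1)

/-- The `ℏ`-derivative of the Moyal–Weyl product structure:
`c₁(a,b) = ∂(a⋆b)/∂ℏ − (∂a/∂ℏ)⋆b − a⋆(∂b/∂ℏ)`. -/
def c1W {n : ℕ} (a b : Wa (2 * n)) : Wa (2 * n) :=
  hD (wmul a b) - wmul (hD a) b - wmul a (hD b)

/-! ### W-valued differential forms on ℝ^{2n} -/

/-- Points of `ℝ^{2n}`. -/
abbrev Pt (n : ℕ) := Fin (2 * n) → ℝ

/-- `W`-valued exterior forms on `ℝ^{2n}`: the component at a finite index set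
`S = {j₁ < ⋯ < j_q}` is the coefficient of `dx^{j₁} ∧ ⋯ ∧ dx^{j_q}`. -/
abbrev WF (n : ℕ) := Finset (Fin (2 * n)) → Pt n → Wa (2 * n)

/-- Sign `(-1)^{#{j ∈ S, j < i}}` for inserting `dx^i` in front of `dx^S`. -/
def insSign {N : ℕ} (S : Finset (Fin N)) (i : Fin N) : ℂ :=
  (-1) ^ (S.filter fun j => j < i).card

/-- Koszul sign for merging `dx^{S₁} ∧ dx^{S₂}` into increasing order. -/
def shuffleSign {N : ℕ} (S1 S2 : Finset (Fin N)) : ℂ :=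
  (-1) ^ ((S1 ×ˢ S2).filter fun p => p.2 < p.1).card

/-- `∂/∂y^i` on the Weyl algebra. -/
def yDa {N : ℕ} (i : Fin N) (w : Wa N) : Wa N := fun m => yD i (w m)

/-- The operator `δ a = Σ_i dx^i ∧ ∂a/∂y^i`. -/
def deltaW {n : ℕ} (a : WF n) : WF n :=
  fun S x => ∑ i ∈ S, insSign S i • yDa i (a (S.erase i) x)

/-- The partial derivative `∂/∂x^i` of a `W`-valued function, taken coefficientwise. -/
def xD {n : ℕ} (i : Fin (2 * n)) (f : Pt n → Wa (2 * n)) (x : Pt n) : Wa (2 * n) :=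
  fun m => Wc.mk fun β =>
    fderiv ℝ (fun x' => MvPowerSeries.coeff β (f x' m)) x (Pi.single i 1)

/-- The exterior derivative `d a = Σ_i dx^i ∧ ∂a/∂x^i` on `W`-valued forms. -/
def extD {n : ℕ} (a : WF n) : WF n :=
  fun S x => ∑ i ∈ S, insSign S i • xD i (a (S.erase i)) x

/-- The product on `W`-valued forms: Moyal–Weyl product combined with wedge product. -/
def wMulF {n : ℕ} (a b : WF n) : WF n :=
  fun S x => ∑ S1 ∈ S.powerset, shuffleSign S1 (S \ S1) • wmul (a S1 x) (b (S \ S1) x)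

/-- Graded commutator `[r, a] = r⋆a − (−1)^{|a|} a⋆r` with a form `r` of degree 1. -/
def comm1 {n : ℕ} (r a : WF n) : WF n :=
  fun S x => wMulF r a S x - (-1 : ℂ) ^ (S.card - 1) • wMulF a r S x

/-- Graded commutator `[u, a] = u⋆a − a⋆u` with a form `u` of even degree. -/
def commE {n : ℕ} (u a : WF n) : WF n := fun S x => wMulF u a S x - wMulF a u S x

/-- The connection `D = −δ + d + (i/ℏ)[r, ·]` determined by a `W`-valued 1-form `r`. -/
def fedD {n : ℕ} (r a : WF n) : WF n :=
  fun S x => -deltaW a S x + extD a S x + Complex.I • hInv (comm1 r a S x)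

/-- A `W`-valued form has smooth coefficients. -/
def WF.Smooth {n : ℕ} (a : WF n) : Prop :=
  ∀ S m β, ContDiff ℝ (⊤ : ℕ∞) fun x => MvPowerSeries.coeff β (a S x m)

/-- A `W`-valued form is homogeneous of form-degree `q`. -/
def isForm {n : ℕ} (q : ℕ) (a : WF n) : Prop := ∀ S, S.card ≠ q → a S = 0

/-- A `W`-valued form is scalar: all coefficients are independent of the `y` variables. -/
def isScalar {n : ℕ} (a : WF n) : Prop :=
  ∀ S x m β, β ≠ 0 → MvPowerSeries.coeff β (a S x m) = 0

/-- The constant standard symplectic 2-form `ω = (1/2) Σ ω_{ij} dx^i ∧ dx^j`. -/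
def omegaF (n : ℕ) : WF n :=
  fun S _ m =>
    if m = 0 then
      MvPowerSeries.C (σ := Fin (2 * n)) (R := ℂ)
        (∑ i : Fin (2 * n), ∑ j : Fin (2 * n),
          if i < j ∧ S = {i, j} then stdOmega n i j else 0)
    else 0

/-- The curvature `Ω = ω + δr − dr − (i/ℏ) r⋆r` of the connection `−δ + d + (i/ℏ)[r,·]`. -/
def curv {n : ℕ} (r : WF n) : WF n :=
  fun S x => omegaF n S x + deltaW r S x - extD r S x - Complex.I • hInv (wMulF r r S x)

/-- The operator `δ⁻¹`, acting as `(1/(p+q)) Σ_k y^k ι_k` on the part of `y`-degree `p`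
and form-degree `q` (and as `0` for `p = q = 0`). -/
def deltaInv {n : ℕ} (a : WF n) : WF n :=
  fun S x m => Wc.mk fun β =>
    ((((β.sum fun _ e => e) + S.card : ℕ) : ℂ))⁻¹ *
      ∑ k : Fin (2 * n),
        if k ∉ S ∧ 1 ≤ β k then
          insSign S k * MvPowerSeries.coeff (β - Finsupp.single k 1) (a (insert k S) x m)
        else 0

/-! ### x-independent W-valued exterior forms (the graded algebra W⊗Λ) -/

/-- `W`-valued exterior forms with constant coefficients. -/
abbrev WL (n : ℕ) := Finset (Fin (2 * n)) → Wa (2 * n)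

/-- `δ` on `W ⊗ Λ`. -/
def deltaWL {n : ℕ} (a : WL n) : WL n :=
  fun S => ∑ i ∈ S, insSign S i • yDa i (a (S.erase i))

/-- Product (Moyal combined with wedge) on `W ⊗ Λ`. -/
def wMulL {n : ℕ} (a b : WL n) : WL n :=
  fun S => ∑ S1 ∈ S.powerset, shuffleSign S1 (S \ S1) • wmul (a S1) (b (S \ S1))

/-- `E` on `W ⊗ Λ`, acting on the `W`-coefficients. -/
def EulL {n : ℕ} (a : WL n) : WL n := fun S => EulWa (a S)

/-- The `W`-valued 1-form `Σ_{i,j} ω_{ij} y^i dx^j`. -/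
def oydxW (n : ℕ) : WL n :=
  fun S m =>
    if m = 0 then
      ∑ j : Fin (2 * n),
        (if S = {j} then ∑ i : Fin (2 * n), stdOmega n i j • MvPowerSeries.X i else 0)
    else 0

/-- The 1-form `K₀ = −(Er − iℏ ∂r/∂ℏ + i r + (i/2) Σ ω_{ij} y^i dx^j)`. -/
def K0 {n : ℕ} (r : WF n) : WF n :=
  fun S x =>
    -(EulWa (r S x) - Complex.I • hM (hD (r S x)) + Complex.I • r S x
      + (Complex.I / 2) • oydxW n S)

/-- The quantum Liouville-type operator `ρ(u) = (ℏ/i) ∂u/∂ℏ + E u`. -/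
def rhoW {n : ℕ} (u : WF n) : WF n :=
  fun S x m => (-Complex.I * (m : ℂ)) • u S x m + EulW (u S x m)

/-- `c₁` extended to `W`-valued forms. -/
def c1F {n : ℕ} (a b : WF n) : WF n :=
  fun S x => ∑ S1 ∈ S.powerset, shuffleSign S1 (S \ S1) • c1W (a S1 x) (b (S \ S1) x)

/-! ### The Laurent (ℏ-inverted) Weyl algebra and forms -/

/-- The extended Weyl algebra `W⁺ = ℂ[[y]][ℏ⁻¹,ℏ]]` as `ℏ`-coefficient sequences. -/
abbrev WaZ (N : ℕ) := ℤ → Wc N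

/-- Moyal–Weyl product on `W⁺` for a constant matrix `π`. -/
def wmulZPi {N : ℕ} (π : Matrix (Fin N) (Fin N) ℂ) (a b : WaZ N) : WaZ N := moyalZ yD π a b

/-- Moyal–Weyl product on `W⁺` for the standard symplectic Poisson matrix. -/
def wmulZ {n : ℕ} (a b : WaZ (2 * n)) : WaZ (2 * n) := wmulZPi (stdPi n) a b

/-- `W⁺`-valued exterior forms on `ℝ^{2n}`. -/
abbrev WFZ (n : ℕ) := Finset (Fin (2 * n)) → Pt n → WaZ (2 * n)

/-- `∂/∂y^i` on `W⁺`. -/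
def yDaZ {N : ℕ} (i : Fin N) (w : WaZ N) : WaZ N := fun m => yD i (w m)

/-- `δ` on `W⁺`-valued forms. -/
def deltaZ {n : ℕ} (a : WFZ n) : WFZ n :=
  fun S x => ∑ i ∈ S, insSign S i • yDaZ i (a (S.erase i) x)

/-- `∂/∂x^i` on `W⁺`-valued functions. -/
def xDZ {n : ℕ} (i : Fin (2 * n)) (f : Pt n → WaZ (2 * n)) (x : Pt n) : WaZ (2 * n) :=
  fun m => Wc.mk fun β =>
    fderiv ℝ (fun x' => MvPowerSeries.coeff β (f x' m)) x (Pi.single i 1)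

/-- Exterior derivative on `W⁺`-valued forms. -/
def extDZ {n : ℕ} (a : WFZ n) : WFZ n :=
  fun S x => ∑ i ∈ S, insSign S i • xDZ i (a (S.erase i)) x

/-- Product on `W⁺`-valued forms. -/
def wMulZF {n : ℕ} (a b : WFZ n) : WFZ n :=
  fun S x => ∑ S1 ∈ S.powerset, shuffleSign S1 (S \ S1) • wmulZ (a S1 x) (b (S \ S1) x)

/-- Graded commutator with a 1-form, on `W⁺`-valued forms. -/
def comm1Z {n : ℕ} (r a : WFZ n) : WFZ n :=
  fun S x => wMulZF r a S x - (-1 : ℂ) ^ (S.card - 1) • wMulZF a r S x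

/-- Division by `ℏ` on `W⁺` (exact: a shift of Laurent coefficients). -/
def shiftZ {N : ℕ} (a : WaZ N) : WaZ N := fun m => a (m + 1)

/-- The connection `D = −δ + d + (i/ℏ)[r,·]` on `W⁺`-valued forms. -/
def fedDZ {n : ℕ} (r a : WFZ n) : WFZ n :=
  fun S x => -deltaZ a S x + extDZ a S x + Complex.I • shiftZ (comm1Z r a S x)

/-- Termwise `∂/∂ℏ` on `W⁺`. -/
def hDZ {N : ℕ} (a : WaZ N) : WaZ N := fun m => ((m + 1 : ℤ) : ℂ) • a (m + 1)

/-- `∂/∂ℏ` on `W⁺`-valued forms. -/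
def hDZF {n : ℕ} (a : WFZ n) : WFZ n := fun S x => hDZ (a S x)

/-- `E` on `W⁺`. -/
def EulZ {N : ℕ} (a : WaZ N) : WaZ N := fun m => EulW (a m)

/-- `E` on `W⁺`-valued forms. -/
def EulZF {n : ℕ} (a : WFZ n) : WFZ n := fun S x => EulZ (a S x)

/-- `c₁` on `W⁺`. -/
def c1Za {n : ℕ} (a b : WaZ (2 * n)) : WaZ (2 * n) :=
  hDZ (wmulZ a b) - wmulZ (hDZ a) b - wmulZ a (hDZ b)

/-- `c₁` on `W⁺`-valued forms. -/
def c1ZF {n : ℕ} (a b : WFZ n) : WFZ n :=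
  fun S x => ∑ S1 ∈ S.powerset, shuffleSign S1 (S \ S1) • c1Za (a S1 x) (b (S \ S1) x)

/-- Smoothness of the coefficients of a `W⁺`-valued form. -/
def WFZ.Smooth {n : ℕ} (a : WFZ n) : Prop :=
  ∀ S m β, ContDiff ℝ (⊤ : ℕ∞) fun x => MvPowerSeries.coeff β (a S x m)

/-- Homogeneity of form-degree `q` for `W⁺`-valued forms. -/
def isFormZ {n : ℕ} (q : ℕ) (a : WFZ n) : Prop := ∀ S, S.card ≠ q → a S = 0

/-- A `W⁺`-valued form has power series coefficients (no negative powers of `ℏ`). -/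
def PSupp {n : ℕ} (a : WFZ n) : Prop := ∀ S x m, m < 0 → a S x m = 0

/-- A Laurent series is bounded below in `ℏ`-degree. -/
def BddZ {α : Type*} [Zero α] (f : ℤ → α) : Prop :=
  ∃ N : ℕ, ∀ m : ℤ, m < -(N : ℤ) → f m = 0

/-! ### Smooth functions and star-products on ℝ^N -/

/-- Complex-valued functions on `ℝ^N`. -/
abbrev SmFn (N : ℕ) := (Fin N → ℝ) → ℂ

/-- Partial derivative `∂/∂x^i` of a (smooth) function. -/
def xDf {N : ℕ} (i : Fin N) (f : SmFn N) : SmFn N := fun x => fderiv ℝ f x (Pi.single i 1)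

/-- Iterated partial derivative `∂^α`. -/
def xDfM {N : ℕ} (α : Fin N →₀ ℕ) (f : SmFn N) : SmFn N :=
  (List.finRange N).foldr (fun i g => (xDf i)^[α i] g) f

/-- Formal power series with function coefficients: `C^∞(ℝ^N,ℂ)[[ℏ]]`. -/
abbrev SmSer (N : ℕ) := ℕ → SmFn N

/-- Formal Laurent series with function coefficients: `C^∞(ℝ^N,ℂ)[ℏ⁻¹,ℏ]]`. -/
abbrev SmLau (N : ℕ) := ℤ → SmFn N

/-- All coefficients of a series are smooth. -/
def SmSer.Smooth {N : ℕ} (F : SmSer N) : Prop := ∀ m, ContDiff ℝ (⊤ : ℕ∞) (F m)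

/-- All coefficients of a Laurent series are smooth. -/
def SmLau.Smooth {N : ℕ} (F : SmLau N) : Prop := ∀ m, ContDiff ℝ (⊤ : ℕ∞) (F m)

/-- The Moyal star-product on `C^∞(ℝ^N,ℂ)[[ℏ]]` for a constant matrix `π`. -/
def fMul {N : ℕ} (π : Matrix (Fin N) (Fin N) ℂ) (F G : SmSer N) : SmSer N :=
  moyalN xDf π F G

/-- The Moyal star-product on Laurent series. -/
def fMulZ {N : ℕ} (π : Matrix (Fin N) (Fin N) ℂ) (F G : SmLau N) : SmLau N :=
  moyalZ xDf π F G

/-- The Moyal star-product with `ℏ`-dependent matrix `π(ℏ) = π₀ + ℏπ₁`. -/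
def fMulH {N : ℕ} (π0 π1 : Matrix (Fin N) (Fin N) ℂ) (F G : SmSer N) : SmSer N :=
  moyalNH xDf π0 π1 F G

/-- The constant series `1`. -/
def oneSer (N : ℕ) : SmSer N := fun m => if m = 0 then (fun _ => 1) else 0

/-- The standard Poisson bracket `{f,g} = Σ π^{ij} ∂_i f ∂_j g` on `ℝ^{2n}`. -/
def pb (n : ℕ) (f g : SmFn (2 * n)) : SmFn (2 * n) :=
  fun x => ∑ i, ∑ j, stdPi n i j * xDf i f x * xDf j g x

/-! ### Multidifferential operators and star-products -/

/-- A `k`-multidifferential operator on `C^∞(ℝ^N,ℂ)`: a finite sum of terms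
`u(x) (∂^{α₁}f₁)⋯(∂^{α_k}f_k)`, recorded by its finitely many coefficients. -/
abbrev MDOp (N k : ℕ) := (Fin k → (Fin N →₀ ℕ)) →₀ SmFn N

/-- Action of a multidifferential operator. -/
def MDOp.app {N k : ℕ} (c : MDOp N k) (f : Fin k → SmFn N) : SmFn N :=
  fun x => c.sum fun T u => u x * ∏ t, xDfM (T t) (f t) x

/-- A multidifferential operator has smooth coefficients. -/
def MDOp.Smooth {N k : ℕ} (c : MDOp N k) : Prop := ∀ T, ContDiff ℝ (⊤ : ℕ∞) (c T)

/-- A family of bidifferential operators `C_k`, extended `ℂ[[ℏ]]`-bilinearly: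
`F ⋆ G = Σ ℏ^{k+l+l'} C_k(F_l, G_{l'})`. -/
def starN {N : ℕ} (C : ℕ → MDOp N 2) (F G : SmSer N) : SmSer N :=
  fun m => ∑ k ∈ Finset.range (m + 1), ∑ l ∈ Finset.range (m - k + 1),
    MDOp.app (C k) ![F l, G (m - k - l)]

/-- The `ℂ[ℏ⁻¹,ℏ]]`-bilinear extension of a star-product to Laurent series. -/
def starZ {N : ℕ} (C : ℕ → MDOp N 2) (F G : SmLau N) : SmLau N :=
  fun m => ∑ᶠ p : ℕ × ℤ, MDOp.app (C p.1) ![F p.2, G (m - p.1 - p.2)]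

/-- Action of a Laurent cochain `c = Σ_l ℏ^l c_l` of multidifferential operators
on a `k`-tuple of Laurent series. -/
def lac {N k : ℕ} (cc : ℤ → MDOp N k) (u : Fin k → SmLau N) : SmLau N :=
  fun m => ∑ᶠ v : Fin k → ℤ, MDOp.app (cc (m - ∑ t, v t)) fun t => u t (v t)

/-- A differential star-product on `ℝ^{2n}` quantizing the standard symplectic
structure: `f ⋆ g = Σ ℏ^k C_k(f,g)` with `C_k` bidifferential, `C₀(f,g) = fg`,
`1` a unit, `⋆` associative, and `C₁(f,g) − C₁(g,f) = −i{f,g}`. -/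
structure DiffStar (n : ℕ) where
  C : ℕ → MDOp (2 * n) 2
  smooth : ∀ k, MDOp.Smooth (C k)
  C0 : ∀ f g : SmFn (2 * n), MDOp.app (C 0) ![f, g] = f * g
  unit_left : ∀ F : SmSer (2 * n), SmSer.Smooth F → starN C (oneSer (2 * n)) F = F
  unit_right : ∀ F : SmSer (2 * n), SmSer.Smooth F → starN C F (oneSer (2 * n)) = F
  assoc : ∀ F G H : SmSer (2 * n), SmSer.Smooth F → SmSer.Smooth G → SmSer.Smooth H →
    starN C (starN C F G) H = starN C F (starN C G H)
  C1skew : ∀ f g : SmFn (2 * n), ContDiff ℝ (⊤ : ℕ∞) f → ContDiff ℝ (⊤ : ℕ∞) g →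
    MDOp.app (C 1) ![f, g] - MDOp.app (C 1) ![g, f] = fun x => -Complex.I * pb n f g x

/-! ### Hochschild coboundary -/

/-- The Hochschild coboundary `b̃` of a `k`-cochain with respect to a product `mul`. -/
def hoch {A : Type*} [AddCommGroup A] (mul : A → A → A) {k : ℕ}
    (c : (Fin k → A) → A) : (Fin (k + 1) → A) → A :=
  fun u =>
    mul (u 0) (c fun t => u t.succ)
      + ∑ i : Fin k, ((-1 : ℤ) ^ ((i : ℕ) + 1)) •
          c (fun j => if (j : ℕ) < (i : ℕ) then u j.castSucc
            else if (j : ℕ) = (i : ℕ) then mul (u j.castSucc) (u j.succ)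
            else u j.succ)
      + ((-1 : ℤ) ^ (k + 1)) • mul (c fun t => u t.castSucc) (u (Fin.last k))

/-! ### Formal differential operators on ℂ[[y]] -/

/-- A formal `k`-differential operator on `ℂ[[y^1,…,y^N]]`:
`c(a₁,…,a_k) = Σ_T u^T (∂^{T 1}a₁)⋯(∂^{T k}a_k)` with coefficients
`u^T ∈ ℂ[[y]]` such that for each degree `d` only finitely many tuples `T` have a
coefficient containing a nonzero monomial of degree `≤ d`. -/
structure FDOp (N k : ℕ) where
  u : (Fin k → (Fin N →₀ ℕ)) → Wc N
  fin : ∀ d : ℕ,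
    {T : Fin k → (Fin N →₀ ℕ) | ∃ β : Fin N →₀ ℕ,
      (β.sum fun _ e => e) ≤ d ∧ MvPowerSeries.coeff β (u T) ≠ 0}.Finite

/-- Action of a formal differential operator (the defining sum converges in the
`y`-adic topology; each coefficient receives only finitely many contributions). -/
def FDOp.app {N k : ℕ} (P : FDOp N k) (a : Fin k → Wc N) : Wc N :=
  Wc.mk fun β => ∑ᶠ T : Fin k → (Fin N →₀ ℕ),
    MvPowerSeries.coeff β (P.u T * ∏ t, yDM (T t) (a t))

/-- Action of a Laurent cochain `c = Σ_l ℏ^l c_l` of formal differential operators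
on a `k`-tuple of elements of `W⁺`. -/
def flac {N k : ℕ} (cc : ℤ → FDOp N k) (a : Fin k → WaZ N) : WaZ N :=
  fun m => ∑ᶠ v : Fin k → ℤ, FDOp.app (cc (m - ∑ t, v t)) fun t => a t (v t)

/-! ### Flat sections, Taylor series and quantum exponential -/

/-- Fiberwise Taylor series of a smooth function at `x`. -/
def taylorW {N : ℕ} (f : SmFn N) (x : Fin N → ℝ) : Wc N :=
  Wc.mk fun β => (∏ i : Fin N, ((β i).factorial : ℂ))⁻¹ * xDfM β f x

/-- Sections of the Weyl bundle over `ℝ^{2n}` (W-valued 0-forms). -/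
abbrev Sect (n : ℕ) := Pt n → Wa (2 * n)

/-- The fiberwise Taylor lift of a series of smooth functions. -/
def taylorS {n : ℕ} (F : SmSer (2 * n)) : Sect n := fun x m => taylorW (F m) x

/-- A section has smooth coefficients. -/
def Sect.Smooth {n : ℕ} (u : Sect n) : Prop :=
  ∀ m β, ContDiff ℝ (⊤ : ℕ∞) fun x => MvPowerSeries.coeff β (u x m)

/-- A section is flat for `D = −δ + d`: its component equations read
`∂u/∂x^i = ∂u/∂y^i` for all `i`. -/
def Sect.Flat {n : ℕ} (u : Sect n) : Prop :=
  ∀ (i : Fin (2 * n)) (x : Pt n), xD i u x = yDa i (u x)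

/-- The symbol map `σ(u) = u|_{y=0}`. -/
def sigma {n : ℕ} (u : Sect n) : SmSer (2 * n) :=
  fun m x => MvPowerSeries.coeff 0 (u x m)

/-- Fiberwise Moyal–Weyl product of sections. -/
def wmulS {n : ℕ} (u v : Sect n) : Sect n := fun x => wmul (u x) (v x)

/-! ### Vector fields and Liouville-type operators -/

/-- Action of a vector field `X = Σ_j X^j ∂_j` on a function. -/
def XAct {N : ℕ} (X : Fin N → SmFn N) (f : SmFn N) : SmFn N :=
  fun x => ∑ j, X j x * xDf j f x

/-- A smooth function viewed as a series concentrated in `ℏ`-degree `0`. -/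
def embS {N : ℕ} (f : SmFn N) : SmSer N := fun m => if m = 0 then f else 0

/-- The Hochschild coboundary `b̃X(f,g) = f⋆(Xg) − X(f⋆g) + (Xf)⋆g` of a vector
field, for the Moyal star-product with constant matrix `π`. -/
def bXMoyal {N : ℕ} (π : Matrix (Fin N) (Fin N) ℂ) (X : Fin N → SmFn N)
    (f g : SmFn N) : SmSer N :=
  fMul π (embS f) (embS (XAct X g)) - (fun m => XAct X (fMul π (embS f) (embS g) m))
    + fMul π (embS (XAct X f)) (embS g)

/-- The operator `ℏ ∂_ℏ + X` on `C^∞(ℝ^N,ℂ)[[ℏ]]`. -/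
def LOp {N : ℕ} (X : Fin N → SmFn N) (F : SmSer N) : SmSer N :=
  fun m x => (m : ℂ) * F m x + XAct X (F m) x

/-- The derivative of a star-product with respect to `ℏ`:
`c(f,g) = Σ_{k≥1} k ℏ^{k-1} C_k(f,g)`, extended `ℂ[[ℏ]]`-bilinearly. -/
def dStar {N : ℕ} (C : ℕ → MDOp N 2) (F G : SmSer N) : SmSer N :=
  fun m => ∑ k ∈ Finset.Icc 1 (m + 1), (k : ℂ) •
    ∑ l ∈ Finset.range (m + 1 - k + 1), MDOp.app (C k) ![F l, G (m + 1 - k - l)]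

end StarPaper
namespace StarPaper

section Chunk1
open Finset

variable {N : ℕ}

lemma coeff_yD (i : Fin N) (a : Wc N) (β : Fin N →₀ ℕ) :
    MvPowerSeries.coeff β (yD i a)
      = ((β i : ℂ) + 1) * MvPowerSeries.coeff (β + Finsupp.single i 1) a := rfl

lemma coeff_EulW (a : Wc N) (β : Fin N →₀ ℕ) :
    MvPowerSeries.coeff β (EulW a)
      = -Complex.I / 2 * (∑ i : Fin N, (β i : ℂ)) * MvPowerSeries.coeff β a := rfl

lemma wc_ext {a b : Wc N} (h : ∀ β, MvPowerSeries.coeff β a = MvPowerSeries.coeff β b) :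
    a = b := MvPowerSeries.ext h

lemma yD_add (i : Fin N) (a b : Wc N) : yD i (a + b) = yD i a + yD i b := by
  apply wc_ext; intro β
  rw [map_add, coeff_yD, coeff_yD, coeff_yD, map_add]; ring

lemma yD_smul (i : Fin N) (c : ℂ) (a : Wc N) : yD i (c • a) = c • yD i a := by
  apply wc_ext; intro β
  rw [map_smul, coeff_yD, coeff_yD, map_smul, smul_eq_mul, smul_eq_mul]; ring

lemma yD_zero (i : Fin N) : yD i (0 : Wc N) = 0 := by
  apply wc_ext; intro β
  simp [coeff_yD]

lemma yD_sub (i : Fin N) (a b : Wc N) : yD i (a - b) = yD i a - yD i b := by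
  apply wc_ext; intro β
  rw [map_sub, coeff_yD, coeff_yD, coeff_yD, map_sub]; ring

lemma iterD_add {k : ℕ} (v : Fin k → Fin N) (a b : Wc N) :
    iterD yD v (a + b) = iterD yD v a + iterD yD v b := by
  induction k with
  | zero => rfl
  | succ k ih => simp only [iterD, ih, yD_add]

lemma iterD_smul {k : ℕ} (v : Fin k → Fin N) (c : ℂ) (a : Wc N) :
    iterD yD v (c • a) = c • iterD yD v a := by
  induction k with
  | zero => rfl
  | succ k ih => simp only [iterD, ih, yD_smul]

lemma iterD_zero {k : ℕ} (v : Fin k → Fin N) : iterD yD v (0 : Wc N) = 0 := by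
  induction k with
  | zero => rfl
  | succ k ih => simp only [iterD, ih, yD_zero]

lemma iterD_sub {k : ℕ} (v : Fin k → Fin N) (a b : Wc N) :
    iterD yD v (a - b) = iterD yD v a - iterD yD v b := by
  induction k with
  | zero => rfl
  | succ k ih => simp only [iterD, ih, yD_sub]

lemma EulW_add (a b : Wc N) : EulW (a + b) = EulW a + EulW b := by
  apply wc_ext; intro β
  rw [map_add, coeff_EulW, coeff_EulW, coeff_EulW, map_add]; ring

lemma EulW_smul (c : ℂ) (a : Wc N) : EulW (c • a) = c • EulW a := by
  apply wc_ext; intro β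
  rw [map_smul, coeff_EulW, coeff_EulW, map_smul, smul_eq_mul, smul_eq_mul]; ring

lemma EulW_zero : EulW (0 : Wc N) = 0 := by
  apply wc_ext; intro β
  simp [coeff_EulW]

lemma EulW_sub (a b : Wc N) : EulW (a - b) = EulW a - EulW b := by
  apply wc_ext; intro β
  rw [map_sub, coeff_EulW, coeff_EulW, coeff_EulW, map_sub]; ring

lemma EulW_sum {α : Type*} (s : Finset α) (f : α → Wc N) :
    EulW (∑ x ∈ s, f x) = ∑ x ∈ s, EulW (f x) := by
  classical
  induction s using Finset.induction with
  | empty => simpa using EulW_zero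
  | insert _ _ h ih => rw [Finset.sum_insert h, Finset.sum_insert h, EulW_add, ih]

lemma EulW_mul (a b : Wc N) : EulW (a * b) = EulW a * b + a * EulW b := by
  apply wc_ext; intro β
  rw [map_add, coeff_EulW, MvPowerSeries.coeff_mul, MvPowerSeries.coeff_mul,
    MvPowerSeries.coeff_mul, Finset.mul_sum, ← Finset.sum_add_distrib]
  refine Finset.sum_congr rfl fun p hp => ?_
  rw [Finset.HasAntidiagonal.mem_antidiagonal] at hp
  have hβ : (∑ i : Fin N, (β i : ℂ)) = (∑ i : Fin N, (p.1 i : ℂ)) + ∑ i : Fin N, (p.2 i : ℂ) := by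
    rw [← Finset.sum_add_distrib]
    refine Finset.sum_congr rfl fun i _ => ?_
    rw [← Nat.cast_add]
    congr 1
    rw [← hp]; rfl
  rw [coeff_EulW, coeff_EulW, hβ]; ring

lemma EulW_yD (i : Fin N) (a : Wc N) :
    EulW (yD i a) = yD i (EulW a) + (Complex.I / 2) • yD i a := by
  apply wc_ext; intro β
  have hs : (∑ j : Fin N, ((((β + Finsupp.single i 1) : Fin N →₀ ℕ) j : ℕ) : ℂ))
      = (∑ j : Fin N, (β j : ℂ)) + 1 := by
    have h1 : ∀ j : Fin N, ((((β + Finsupp.single i 1) : Fin N →₀ ℕ) j : ℕ) : ℂ)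
        = (β j : ℂ) + (if i = j then 1 else 0) := by
      intro j
      rw [Finsupp.add_apply, Nat.cast_add, Finsupp.single_apply]
      split <;> simp
    rw [Finset.sum_congr rfl fun j _ => h1 j, Finset.sum_add_distrib]
    simp
  rw [map_add, map_smul]
  simp only [coeff_EulW, coeff_yD, smul_eq_mul]
  rw [hs]; ring

end Chunk1

section Chunk2
open Finset

variable {N : ℕ}

lemma moyalTerm_add_left (π : Matrix (Fin N) (Fin N) ℂ) (k : ℕ) (a a' b : Wc N) :
    moyalTerm yD π k (a + a') b = moyalTerm yD π k a b + moyalTerm yD π k a' b := by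
  unfold moyalTerm
  rw [← smul_add, ← Finset.sum_add_distrib]
  congr 1
  refine Finset.sum_congr rfl fun i _ => ?_
  rw [← Finset.sum_add_distrib]
  refine Finset.sum_congr rfl fun j _ => ?_
  rw [iterD_add, add_mul, smul_add]

lemma moyalTerm_add_right (π : Matrix (Fin N) (Fin N) ℂ) (k : ℕ) (a b b' : Wc N) :
    moyalTerm yD π k a (b + b') = moyalTerm yD π k a b + moyalTerm yD π k a b' := by
  unfold moyalTerm
  rw [← smul_add, ← Finset.sum_add_distrib]
  congr 1
  refine Finset.sum_congr rfl fun i _ => ?_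
  rw [← Finset.sum_add_distrib]
  refine Finset.sum_congr rfl fun j _ => ?_
  rw [iterD_add, mul_add, smul_add]

lemma moyalTerm_smul_left (π : Matrix (Fin N) (Fin N) ℂ) (k : ℕ) (c : ℂ) (a b : Wc N) :
    moyalTerm yD π k (c • a) b = c • moyalTerm yD π k a b := by
  unfold moyalTerm
  rw [smul_comm c]
  congr 1
  rw [Finset.smul_sum]
  refine Finset.sum_congr rfl fun i _ => ?_
  rw [Finset.smul_sum]
  refine Finset.sum_congr rfl fun j _ => ?_
  rw [iterD_smul, smul_mul_assoc, smul_comm c]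

lemma moyalTerm_smul_right (π : Matrix (Fin N) (Fin N) ℂ) (k : ℕ) (c : ℂ) (a b : Wc N) :
    moyalTerm yD π k a (c • b) = c • moyalTerm yD π k a b := by
  unfold moyalTerm
  rw [smul_comm c]
  congr 1
  rw [Finset.smul_sum]
  refine Finset.sum_congr rfl fun i _ => ?_
  rw [Finset.smul_sum]
  refine Finset.sum_congr rfl fun j _ => ?_
  rw [iterD_smul, mul_smul_comm, smul_comm c]

lemma moyalTerm_zero_left (π : Matrix (Fin N) (Fin N) ℂ) (k : ℕ) (b : Wc N) :
    moyalTerm yD π k (0 : Wc N) b = 0 := by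
  unfold moyalTerm
  simp only [iterD_zero, zero_mul, smul_zero, Finset.sum_const_zero]

lemma moyalTerm_zero_right (π : Matrix (Fin N) (Fin N) ℂ) (k : ℕ) (a : Wc N) :
    moyalTerm yD π k a (0 : Wc N) = 0 := by
  unfold moyalTerm
  simp only [iterD_zero, mul_zero, smul_zero, Finset.sum_const_zero]

lemma moyalTerm_sub_left (π : Matrix (Fin N) (Fin N) ℂ) (k : ℕ) (a a' b : Wc N) :
    moyalTerm yD π k (a - a') b = moyalTerm yD π k a b - moyalTerm yD π k a' b := by
  have := moyalTerm_add_left π k a' (a - a') b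
  rw [add_sub_cancel] at this; rw [this]; abel

lemma moyalTerm_sub_right (π : Matrix (Fin N) (Fin N) ℂ) (k : ℕ) (a b b' : Wc N) :
    moyalTerm yD π k a (b - b') = moyalTerm yD π k a b - moyalTerm yD π k a b' := by
  have := moyalTerm_add_right π k a b' (b - b')
  rw [add_sub_cancel] at this; rw [this]; abel

lemma EulW_iterD {k : ℕ} (v : Fin k → Fin N) (a : Wc N) :
    EulW (iterD yD v a)
      = iterD yD v (EulW a) + ((k : ℂ) * Complex.I / 2) • iterD yD v a := by
  induction k with
  | zero => simp [iterD]
  | succ k ih =>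
      have h1 : iterD yD v a = yD (v 0) (iterD yD (fun t => v t.succ) a) := rfl
      have h2 : iterD yD v (EulW a) = yD (v 0) (iterD yD (fun t => v t.succ) (EulW a)) := rfl
      rw [h1, h2, EulW_yD, ih (fun t => v t.succ), yD_add, yD_smul, Nat.cast_succ]
      module

lemma EulW_moyalTerm (π : Matrix (Fin N) (Fin N) ℂ) (k : ℕ) (a b : Wc N) :
    EulW (moyalTerm yD π k a b)
      = moyalTerm yD π k (EulW a) b + moyalTerm yD π k a (EulW b)
        + ((k : ℂ) * Complex.I) • moyalTerm yD π k a b := by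
  unfold moyalTerm
  rw [EulW_smul, smul_comm ((k : ℂ) * Complex.I), ← smul_add, ← smul_add]
  congr 1
  rw [EulW_sum, Finset.smul_sum, ← Finset.sum_add_distrib, ← Finset.sum_add_distrib]
  refine Finset.sum_congr rfl fun i _ => ?_
  rw [EulW_sum, Finset.smul_sum, ← Finset.sum_add_distrib, ← Finset.sum_add_distrib]
  refine Finset.sum_congr rfl fun j _ => ?_
  rw [EulW_smul, EulW_mul, EulW_iterD, EulW_iterD, add_mul, mul_add, smul_mul_assoc,
    mul_smul_comm]
  match_scalars <;> ring

lemma hM_hD_apply (u : Wa N) (m : ℕ) : hM (hD u) m = (m : ℂ) • u m := by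
  cases m with
  | zero => show (0 : Wc N) = _; simp
  | succ m =>
      show hD u m = _
      show ((m + 1 : ℕ) : ℂ) • u (m + 1) = _
      norm_num

def LwA (u : Wa N) : Wa N := EulWa u - Complex.I • hM (hD u)

lemma LwA_apply (u : Wa N) (m : ℕ) :
    LwA u m = EulW (u m) - ((m : ℂ) * Complex.I) • u m := by
  show EulWa u m - (Complex.I • hM (hD u)) m = _
  rw [Pi.smul_apply, hM_hD_apply, smul_smul, mul_comm]
  rfl

lemma LwA_add (u v : Wa N) : LwA (u + v) = LwA u + LwA v := by
  funext m
  rw [Pi.add_apply, LwA_apply, LwA_apply, LwA_apply, Pi.add_apply, EulW_add, smul_add]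
  abel

lemma LwA_smul (c : ℂ) (u : Wa N) : LwA (c • u) = c • LwA u := by
  funext m
  rw [Pi.smul_apply, LwA_apply, LwA_apply, Pi.smul_apply, EulW_smul]
  module

lemma LwA_zero : LwA (0 : Wa N) = 0 := by
  funext m
  rw [LwA_apply]
  show EulW 0 - ((m : ℂ) * Complex.I) • (0 : Wc N) = 0
  rw [EulW_zero, smul_zero, sub_zero]

lemma LwA_sub (u v : Wa N) : LwA (u - v) = LwA u - LwA v := by
  have := LwA_add v (u - v); rw [add_sub_cancel] at this; rw [this]; abel

lemma LwA_neg (u : Wa N) : LwA (-u) = -LwA u := by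
  have h := LwA_sub 0 u; rw [zero_sub, LwA_zero, zero_sub] at h; exact h

lemma LwA_sum {α : Type*} (s : Finset α) (f : α → Wa N) :
    LwA (∑ x ∈ s, f x) = ∑ x ∈ s, LwA (f x) := by
  classical
  induction s using Finset.induction with
  | empty => simpa using LwA_zero
  | insert _ _ h ih => rw [Finset.sum_insert h, Finset.sum_insert h, LwA_add, ih]

lemma LwA_wmulPi (π : Matrix (Fin N) (Fin N) ℂ) (a b : Wa N) :
    LwA (wmulPi π a b) = wmulPi π (LwA a) b + wmulPi π a (LwA b) := by
  funext m
  rw [Pi.add_apply, LwA_apply]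
  have key : ∀ k ∈ Finset.range (m + 1), ∀ l ∈ Finset.range (m - k + 1),
      EulW (moyalTerm yD π k (a l) (b (m - k - l)))
        - ((m : ℂ) * Complex.I) • moyalTerm yD π k (a l) (b (m - k - l))
      = moyalTerm yD π k (LwA a l) (b (m - k - l))
        + moyalTerm yD π k (a l) (LwA b (m - k - l)) := by
    intro k hk l hl
    rw [Finset.mem_range] at hk hl
    have hk' : k ≤ m := Nat.lt_succ_iff.mp hk
    have hl' : l ≤ m - k := Nat.lt_succ_iff.mp hl
    have hc : ((m - k - l : ℕ) : ℂ) = (m : ℂ) - (k : ℂ) - (l : ℂ) := by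
      have h1 : ((m - k : ℕ) : ℂ) = (m : ℂ) - (k : ℂ) := by
        push_cast [Nat.cast_sub hk']; ring
      rw [Nat.cast_sub hl', h1]
    rw [EulW_moyalTerm, LwA_apply, LwA_apply, moyalTerm_sub_left, moyalTerm_smul_left,
      moyalTerm_sub_right, moyalTerm_smul_right, hc]
    match_scalars <;> ring
  show EulW ((wmulPi π a b) m) - _ = _
  have hw : (wmulPi π a b) m = ∑ k ∈ Finset.range (m + 1), ∑ l ∈ Finset.range (m - k + 1),
      moyalTerm yD π k (a l) (b (m - k - l)) := rfl
  have hw1 : (wmulPi π (LwA a) b) m = ∑ k ∈ Finset.range (m + 1), ∑ l ∈ Finset.range (m - k + 1),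
      moyalTerm yD π k (LwA a l) (b (m - k - l)) := rfl
  have hw2 : (wmulPi π a (LwA b)) m = ∑ k ∈ Finset.range (m + 1), ∑ l ∈ Finset.range (m - k + 1),
      moyalTerm yD π k (a l) (LwA b (m - k - l)) := rfl
  rw [hw, hw1, hw2, EulW_sum, Finset.smul_sum, ← Finset.sum_sub_distrib,
    ← Finset.sum_add_distrib]
  refine Finset.sum_congr rfl fun k hk => ?_
  rw [EulW_sum, Finset.smul_sum, ← Finset.sum_sub_distrib, ← Finset.sum_add_distrib]
  exact Finset.sum_congr rfl fun l hl => key k hk l hl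

lemma wmulPi_add_left (π : Matrix (Fin N) (Fin N) ℂ) (a a' b : Wa N) :
    wmulPi π (a + a') b = wmulPi π a b + wmulPi π a' b := by
  funext m
  simp only [wmulPi, moyalN, Pi.add_apply, moyalTerm_add_left, Finset.sum_add_distrib]

lemma wmulPi_add_right (π : Matrix (Fin N) (Fin N) ℂ) (a b b' : Wa N) :
    wmulPi π a (b + b') = wmulPi π a b + wmulPi π a b' := by
  funext m
  simp only [wmulPi, moyalN, Pi.add_apply, moyalTerm_add_right, Finset.sum_add_distrib]

lemma wmulPi_smul_left (π : Matrix (Fin N) (Fin N) ℂ) (c : ℂ) (a b : Wa N) :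
    wmulPi π (c • a) b = c • wmulPi π a b := by
  funext m
  simp only [wmulPi, moyalN, Pi.smul_apply, moyalTerm_smul_left, Finset.smul_sum]

lemma wmulPi_smul_right (π : Matrix (Fin N) (Fin N) ℂ) (c : ℂ) (a b : Wa N) :
    wmulPi π a (c • b) = c • wmulPi π a b := by
  funext m
  simp only [wmulPi, moyalN, Pi.smul_apply, moyalTerm_smul_right, Finset.smul_sum]

lemma wmulPi_zero_left (π : Matrix (Fin N) (Fin N) ℂ) (b : Wa N) :
    wmulPi π (0 : Wa N) b = 0 := by
  funext m
  simp [wmulPi, moyalN, moyalTerm_zero_left]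

lemma wmulPi_zero_right (π : Matrix (Fin N) (Fin N) ℂ) (a : Wa N) :
    wmulPi π a (0 : Wa N) = 0 := by
  funext m
  simp [wmulPi, moyalN, moyalTerm_zero_right]

end Chunk2

section Chunk3
open Finset

variable {N n : ℕ}

lemma yD_sum {α : Type*} (p : Fin N) (s : Finset α) (f : α → Wc N) :
    yD p (∑ x ∈ s, f x) = ∑ x ∈ s, yD p (f x) := by
  classical
  induction s using Finset.induction with
  | empty => simpa using yD_zero p
  | insert _ _ h ih => rw [Finset.sum_insert h, Finset.sum_insert h, yD_add, ih]

/-- The symplectic partner index. -/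
def partner (n : ℕ) (p : Fin (2 * n)) : Fin (2 * n) :=
  ⟨if (p : ℕ) < n then (p : ℕ) + n else (p : ℕ) - n, by have := p.isLt; split_ifs <;> omega⟩

def sg (n : ℕ) (p : Fin (2 * n)) : ℂ := if (p : ℕ) < n then 1 else -1

lemma partner_val (p : Fin (2 * n)) :
    ((partner n p : Fin (2 * n)) : ℕ) = if (p : ℕ) < n then (p : ℕ) + n else (p : ℕ) - n := rfl

lemma stdPi_apply (p q : Fin (2 * n)) :
    stdPi n p q = if q = partner n p then sg n p else 0 := by
  have hq2 := q.isLt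
  have hp := p.isLt
  have hqv : q = partner n p ↔ ((q : ℕ) = if (p : ℕ) < n then (p : ℕ) + n else (p : ℕ) - n) :=
    ⟨fun h => by rw [h]; rfl, fun h => Fin.ext (by rw [partner_val]; exact h)⟩
  show (if (p : ℕ) + n = (q : ℕ) then (1 : ℂ) else if (q : ℕ) + n = (p : ℕ) then -1 else 0) = _
  rcases Nat.lt_or_ge (p : ℕ) n with hn | hn
  · by_cases hc : q = partner n p
    · have hv := hqv.mp hc
      rw [if_pos hn] at hv
      rw [if_pos hc, if_pos (by omega), show sg n p = 1 from if_pos hn]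
    · have hv : ¬((q : ℕ) = (p : ℕ) + n) := fun h => hc (hqv.mpr (by rw [if_pos hn]; omega))
      rw [if_neg hc, if_neg (by omega), if_neg (by omega)]
  · by_cases hc : q = partner n p
    · have hv := hqv.mp hc
      rw [if_neg (Nat.not_lt.mpr hn)] at hv
      rw [if_pos hc, if_neg (by omega), if_pos (by omega),
        show sg n p = -1 from if_neg (Nat.not_lt.mpr hn)]
    · have hv : ¬((q : ℕ) = (p : ℕ) - n) := fun h =>
        hc (hqv.mpr (by rw [if_neg (Nat.not_lt.mpr hn)]; omega))
      rw [if_neg hc, if_neg (by omega), if_neg (by omega)]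

lemma partner_partner (p : Fin (2 * n)) : partner n (partner n p) = p := by
  apply Fin.ext
  rw [partner_val, partner_val]
  have hp := p.isLt
  split_ifs <;> omega

lemma partner_eq_iff (p q : Fin (2 * n)) : partner n p = partner n q ↔ p = q := by
  constructor
  · intro h
    have h2 := congrArg (partner n) h
    rwa [partner_partner, partner_partner] at h2
  · intro h; rw [h]

lemma sg_mul_self (p : Fin (2 * n)) : sg n p * sg n p = 1 := by
  unfold sg; split_ifs <;> norm_num

lemma rowOrth (p j : Fin (2 * n)) :
    ∑ q, stdPi n p q * stdPi n j q = if p = j then 1 else 0 := by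
  rw [Finset.sum_eq_single (partner n p)]
  · rw [stdPi_apply, if_pos rfl, stdPi_apply]
    by_cases h : p = j
    · subst h; rw [if_pos rfl, sg_mul_self, if_pos rfl]
    · rw [if_neg (fun hc : partner n p = partner n j => h ((partner_eq_iff p j).mp hc)),
        mul_zero, if_neg h]
  · intro b _ hb
    rw [stdPi_apply p b, if_neg hb, zero_mul]
  · intro h; exact absurd (Finset.mem_univ _) h

lemma stdPi_antisymm (p q : Fin (2 * n)) : stdPi n p q = -stdPi n q p := by
  have hq := q.isLt
  have hp := p.isLt
  show (if (p : ℕ) + n = (q : ℕ) then (1 : ℂ) else if (q : ℕ) + n = (p : ℕ) then -1 else 0)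
    = -(if (q : ℕ) + n = (p : ℕ) then (1 : ℂ) else if (p : ℕ) + n = (q : ℕ) then -1 else 0)
  split_ifs <;> first | ring | (exfalso; omega) | skip
  all_goals (exfalso; omega)

lemma piOmega_col (q j : Fin (2 * n)) :
    ∑ p, stdPi n p q * stdOmega n p j = -(if q = j then 1 else 0) := by
  have h : ∀ p, stdPi n p q * stdOmega n p j = -(stdPi n q p * stdPi n j p) := by
    intro p
    have h1 : stdOmega n p j = -(stdPi n p j) := rfl
    rw [h1, stdPi_antisymm p q, stdPi_antisymm p j]
    ring
  rw [Finset.sum_congr rfl fun p _ => h p, ← rowOrth q j, Finset.sum_neg_distrib]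

lemma piOmega_row (p j : Fin (2 * n)) :
    ∑ q, stdPi n p q * stdOmega n q j = if p = j then 1 else 0 := by
  have h : ∀ q, stdPi n p q * stdOmega n q j = stdPi n p q * stdPi n j q := by
    intro q
    have h1 : stdOmega n q j = -(stdPi n q j) := rfl
    rw [h1, stdPi_antisymm q j]
    ring
  rw [Finset.sum_congr rfl fun q _ => h q, rowOrth]

/-- The linear coefficient `Σ_i ω_{ij} y^i`. -/
def cWc (n : ℕ) (j : Fin (2 * n)) : Wc (2 * n) :=
  ∑ i, stdOmega n i j • MvPowerSeries.X i

lemma yD_one (p : Fin N) : yD p (1 : Wc N) = 0 := by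
  apply wc_ext; intro β
  rw [coeff_yD, map_zero]
  have hne : β + Finsupp.single p 1 ≠ 0 := by
    intro h
    have h2 := DFunLike.congr_fun h p
    simp [Finsupp.single_apply] at h2
  rw [MvPowerSeries.coeff_one, if_neg hne, mul_zero]

lemma yD_X (p i : Fin N) :
    yD p (MvPowerSeries.X i : Wc N) = if p = i then 1 else 0 := by
  apply wc_ext; intro β
  rw [coeff_yD, MvPowerSeries.coeff_X]
  by_cases hpi : p = i
  · subst hpi
    rw [if_pos rfl]
    by_cases hβ : β = 0
    · subst hβ; simp [MvPowerSeries.coeff_one]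
    · have hne : β + Finsupp.single p 1 ≠ Finsupp.single p 1 := by
        intro h
        exact hβ (by simpa using add_eq_right.mp h)
      rw [if_neg hne, MvPowerSeries.coeff_one, if_neg hβ, mul_zero]
  · have hne : β + Finsupp.single p 1 ≠ Finsupp.single i 1 := by
      intro h
      have h2 := DFunLike.congr_fun h p
      simp [Finsupp.single_apply, Ne.symm hpi] at h2
    rw [if_neg hne, if_neg hpi, map_zero, mul_zero]

lemma yD_cWc (p j : Fin (2 * n)) : yD p (cWc n j) = stdOmega n p j • 1 := by
  unfold cWc
  rw [yD_sum]
  have h : ∀ i, yD p (stdOmega n i j • MvPowerSeries.X i)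
      = if p = i then stdOmega n i j • 1 else 0 := by
    intro i
    rw [yD_smul, yD_X]
    split_ifs <;> simp
  rw [Finset.sum_congr rfl fun i _ => h i, Finset.sum_ite_eq]
  simp

lemma iterD_cWc_const {j : Fin (2 * n)} :
    ∀ {k : ℕ} (w : Fin (k + 1) → Fin (2 * n)), ∃ s : ℂ, iterD yD w (cWc n j) = s • 1 := by
  intro k
  induction k with
  | zero =>
      intro w
      exact ⟨stdOmega n (w 0) j, yD_cWc (w 0) j⟩
  | succ k ih =>
      intro w
      obtain ⟨s, hs⟩ := ih (fun t => w t.succ)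
      refine ⟨0, ?_⟩
      show yD (w 0) (iterD yD (fun t => w t.succ) (cWc n j)) = _
      rw [hs, yD_smul, yD_one, smul_zero, zero_smul]

lemma iterD_cWc_zero {j : Fin (2 * n)} {k : ℕ} (hk : 2 ≤ k) (v : Fin k → Fin (2 * n)) :
    iterD yD v (cWc n j) = 0 := by
  obtain ⟨k', rfl⟩ : ∃ k', k = k' + 2 := ⟨k - 2, by omega⟩
  obtain ⟨s, hs⟩ := iterD_cWc_const (n := n) (j := j) (fun t : Fin (k' + 1) => v t.succ)
  show yD (v 0) (iterD yD (fun t => v t.succ) (cWc n j)) = 0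
  rw [hs, yD_smul, yD_one, smul_zero]

lemma moyalTerm_cWc_left {j : Fin (2 * n)} {k : ℕ} (hk : 2 ≤ k) (a : Wc (2 * n)) :
    moyalTerm yD (stdPi n) k (cWc n j) a = 0 := by
  unfold moyalTerm
  have h : ∀ i : Fin k → Fin (2 * n), iterD yD i (cWc n j) = 0 := fun i => iterD_cWc_zero hk i
  simp only [h, zero_mul, smul_zero, Finset.sum_const_zero]

lemma moyalTerm_cWc_right {j : Fin (2 * n)} {k : ℕ} (hk : 2 ≤ k) (a : Wc (2 * n)) :
    moyalTerm yD (stdPi n) k a (cWc n j) = 0 := by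
  unfold moyalTerm
  have h : ∀ i : Fin k → Fin (2 * n), iterD yD i (cWc n j) = 0 := fun i => iterD_cWc_zero hk i
  simp only [h, mul_zero, smul_zero, Finset.sum_const_zero]

lemma sum_funOne {M : Type*} [AddCommMonoid M] (f : (Fin 1 → Fin N) → M) :
    (∑ i : Fin 1 → Fin N, f i) = ∑ p : Fin N, f (fun _ => p) :=
  Fintype.sum_equiv (Equiv.funUnique (Fin 1) (Fin N)) f (fun p => f (fun _ => p))
    (fun i => congrArg f (funext fun t => congrArg i (Subsingleton.elim t default)))

lemma moyalTerm_zero_k (π : Matrix (Fin N) (Fin N) ℂ) (a b : Wc N) :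
    moyalTerm yD π 0 a b = a * b := by
  unfold moyalTerm
  rw [Fintype.sum_unique, Fintype.sum_unique]
  norm_num [Nat.factorial]
  rfl

lemma moyalTerm_one_left {j : Fin (2 * n)} (a : Wc (2 * n)) :
    moyalTerm yD (stdPi n) 1 (cWc n j) a = (Complex.I / 2) • yD j a := by
  unfold moyalTerm
  rw [sum_funOne]
  have h1 : ∀ p : Fin (2 * n),
      (∑ jj : Fin 1 → Fin (2 * n), (∏ t, stdPi n ((fun _ : Fin 1 => p) t) (jj t)) •
        (iterD yD (fun _ : Fin 1 => p) (cWc n j) * iterD yD jj a))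
      = ∑ q : Fin (2 * n), (stdPi n p q * stdOmega n p j) • yD q a := by
    intro p
    rw [sum_funOne]
    refine Finset.sum_congr rfl fun q _ => ?_
    rw [Fin.prod_univ_one]
    have h5 : iterD yD (fun _ : Fin 1 => p) (cWc n j) = stdOmega n p j • 1 := yD_cWc p j
    have h6 : iterD yD (fun _ : Fin 1 => q) a = yD q a := rfl
    rw [h5, h6, smul_mul_assoc, one_mul, smul_smul]
  rw [Finset.sum_congr rfl fun p _ => h1 p, Finset.sum_comm]
  have h3 : ∀ q, (∑ p : Fin (2 * n), (stdPi n p q * stdOmega n p j) • yD q a)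
      = if q = j then -(yD q a) else 0 := by
    intro q
    rw [← Finset.sum_smul, piOmega_col]
    split_ifs <;> simp
  rw [Finset.sum_congr rfl fun q _ => h3 q, Finset.sum_ite_eq' Finset.univ j]
  simp only [Finset.mem_univ, if_true]
  rw [pow_one]
  match_scalars
  norm_num [Nat.factorial]
  try ring

lemma moyalTerm_one_right {j : Fin (2 * n)} (a : Wc (2 * n)) :
    moyalTerm yD (stdPi n) 1 a (cWc n j) = (-Complex.I / 2) • yD j a := by
  unfold moyalTerm
  rw [sum_funOne]
  have h1 : ∀ p : Fin (2 * n),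
      (∑ jj : Fin 1 → Fin (2 * n), (∏ t, stdPi n ((fun _ : Fin 1 => p) t) (jj t)) •
        (iterD yD (fun _ : Fin 1 => p) a * iterD yD jj (cWc n j)))
      = (if p = j then (1:ℂ) else 0) • yD p a := by
    intro p
    rw [sum_funOne]
    have h2 : ∀ q : Fin (2 * n),
        (∏ t : Fin 1, stdPi n ((fun _ => p) t) (((fun _ => q) : Fin 1 → _) t)) •
          (iterD yD (fun _ : Fin 1 => p) a * iterD yD (fun _ : Fin 1 => q) (cWc n j))
        = (stdPi n p q * stdOmega n q j) • yD p a := by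
      intro q
      rw [Fin.prod_univ_one]
      have h5 : iterD yD (fun _ : Fin 1 => q) (cWc n j) = stdOmega n q j • 1 := yD_cWc q j
      have h6 : iterD yD (fun _ : Fin 1 => p) a = yD p a := rfl
      rw [h5, h6, mul_smul_comm, mul_one, smul_smul]
    rw [Finset.sum_congr rfl fun q _ => h2 q, ← Finset.sum_smul, piOmega_row]
  rw [Finset.sum_congr rfl fun p _ => h1 p]
  have h4 : ∀ p, ((if p = j then (1:ℂ) else 0)) • yD p a = if p = j then yD p a else 0 := by
    intro p; split_ifs <;> simp
  rw [Finset.sum_congr rfl fun p _ => h4 p, Finset.sum_ite_eq' Finset.univ j]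
  simp only [Finset.mem_univ, if_true]
  rw [pow_one]
  match_scalars
  norm_num [Nat.factorial]
  try ring

/-- `Σ_i ω_{ij} y^i` as an element of the Weyl algebra (in `ℏ`-degree 0). -/
def cWa (n : ℕ) (j : Fin (2 * n)) : Wa (2 * n) := fun m => if m = 0 then cWc n j else 0

lemma wmul_cWa_comm (j : Fin (2 * n)) (a : Wa (2 * n)) :
    wmul (cWa n j) a - wmul a (cWa n j) = Complex.I • hM (yDa j a) := by
  funext m
  rw [Pi.sub_apply]
  have h1 : wmul (cWa n j) a m
      = ∑ k ∈ Finset.range (m + 1), moyalTerm yD (stdPi n) k (cWc n j) (a (m - k)) := by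
    show (∑ k ∈ Finset.range (m + 1), ∑ l ∈ Finset.range (m - k + 1),
        moyalTerm yD (stdPi n) k (cWa n j l) (a (m - k - l))) = _
    refine Finset.sum_congr rfl fun k hk => ?_
    rw [Finset.sum_eq_single_of_mem 0 (Finset.mem_range.mpr (Nat.succ_pos _))]
    · show moyalTerm yD (stdPi n) k (cWa n j 0) (a (m - k - 0)) = _
      rw [show cWa n j 0 = cWc n j from rfl, Nat.sub_zero]
    · intro l _ hl
      rw [show cWa n j l = 0 from if_neg hl, moyalTerm_zero_left]
  have h2 : wmul a (cWa n j) m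
      = ∑ k ∈ Finset.range (m + 1), moyalTerm yD (stdPi n) k (a (m - k)) (cWc n j) := by
    show (∑ k ∈ Finset.range (m + 1), ∑ l ∈ Finset.range (m - k + 1),
        moyalTerm yD (stdPi n) k (a l) (cWa n j (m - k - l))) = _
    refine Finset.sum_congr rfl fun k hk => ?_
    rw [Finset.sum_eq_single_of_mem (m - k) (Finset.mem_range.mpr (Nat.lt_succ_self _))]
    · rw [show cWa n j (m - k - (m - k)) = cWc n j from by rw [Nat.sub_self]; rfl]
    · intro l hl hlne
      have hl' : l < m - k + 1 := Finset.mem_range.mp hl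
      have hz : m - k - l ≠ 0 := by omega
      rw [show cWa n j (m - k - l) = 0 from if_neg hz, moyalTerm_zero_right]
  rw [h1, h2, ← Finset.sum_sub_distrib]
  have hterm : ∀ k ∈ Finset.range (m + 1),
      (moyalTerm yD (stdPi n) k (cWc n j) (a (m - k))
        - moyalTerm yD (stdPi n) k (a (m - k)) (cWc n j))
      = if k = 1 then Complex.I • yD j (a (m - 1)) else 0 := by
    intro k _
    match k with
    | 0 =>
        rw [moyalTerm_zero_k, moyalTerm_zero_k, mul_comm (cWc n j), sub_self, if_neg (by omega)]
    | 1 =>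
        rw [moyalTerm_one_left, moyalTerm_one_right, if_pos rfl]
        match_scalars; ring
    | (k' + 2) =>
        rw [moyalTerm_cWc_left (by omega), moyalTerm_cWc_right (by omega), sub_self,
          if_neg (by omega)]
  rw [Finset.sum_congr rfl hterm, Finset.sum_ite_eq' (Finset.range (m + 1)) 1]
  cases m with
  | zero =>
      rw [if_neg (by simp)]
      show (0 : Wc (2 * n)) = Complex.I • (0 : Wc (2 * n))
      rw [smul_zero]
  | succ m' =>
      rw [if_pos (Finset.mem_range.mpr (by omega))]
      rfl

end Chunk3

section Chunk4
open Finset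

variable {N n : ℕ}

lemma hInv_add (u v : Wa N) : hInv (u + v) = hInv u + hInv v := rfl
lemma hInv_smul (c : ℂ) (u : Wa N) : hInv (c • u) = c • hInv u := rfl
lemma hInv_neg (u : Wa N) : hInv (-u) = -hInv u := rfl
lemma hInv_zero : hInv (0 : Wa N) = 0 := rfl

lemma hInv_hM (u : Wa N) : hInv (hM u) = u := by
  funext m; rfl

lemma hInv_LwA (u : Wa N) : hInv (LwA u) = LwA (hInv u) - Complex.I • hInv u := by
  funext m
  have h1 : hInv (LwA u) m = LwA u (m + 1) := rfl
  rw [Pi.sub_apply, Pi.smul_apply, h1, LwA_apply, LwA_apply]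
  have h2 : hInv u m = u (m + 1) := rfl
  rw [h2]
  push_cast
  module

lemma yDa_add (i : Fin N) (u v : Wa N) : yDa i (u + v) = yDa i u + yDa i v := by
  funext m
  show yD i ((u + v) m) = yD i (u m) + yD i (v m)
  rw [Pi.add_apply, yD_add]

lemma yDa_smul (i : Fin N) (c : ℂ) (u : Wa N) : yDa i (c • u) = c • yDa i u := by
  funext m
  show yD i ((c • u) m) = c • yD i (u m)
  rw [Pi.smul_apply, yD_smul]

lemma yDa_zero (i : Fin N) : yDa i (0 : Wa N) = 0 := by
  funext m
  show yD i ((0 : Wa N) m) = 0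
  rw [Pi.zero_apply, yD_zero]

lemma yDa_neg (i : Fin N) (u : Wa N) : yDa i (-u) = -yDa i u := by
  funext m
  show yD i ((-u) m) = -yD i (u m)
  rw [Pi.neg_apply, ← zero_sub (u m), yD_sub, yD_zero, zero_sub]

lemma yDa_LwA (i : Fin N) (u : Wa N) :
    yDa i (LwA u) = LwA (yDa i u) - (Complex.I / 2) • yDa i u := by
  funext m
  have h0 : yDa i (LwA u) m = yD i (LwA u m) := rfl
  rw [Pi.sub_apply, Pi.smul_apply, h0, LwA_apply, LwA_apply, yD_sub, yD_smul]
  have h1 : yD i (EulW (u m)) = EulW (yD i (u m)) - (Complex.I / 2) • yD i (u m) := by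
    have := EulW_yD i (u m)
    rw [this]; abel
  rw [h1]
  have h2 : yDa i u m = yD i (u m) := rfl
  rw [h2]
  module

lemma EulW_C (c : ℂ) : EulW (MvPowerSeries.C (σ := Fin N) (R := ℂ) c) = 0 := by
  apply wc_ext; intro β
  rw [coeff_EulW, map_zero, MvPowerSeries.coeff_C]
  by_cases h : β = 0
  · subst h
    simp
  · rw [if_neg h, mul_zero]

lemma stdOmega_antisymm (p q : Fin (2 * n)) : stdOmega n p q = -stdOmega n q p := by
  show -(stdPi n p q) = -(-(stdPi n q p))
  rw [stdPi_antisymm p q]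

/-- sum over the powerset reduces to singletons when `f` kills everything else. -/
lemma sum_powerset_singletons {α M : Type*} [DecidableEq α] [AddCommMonoid M]
    (S : Finset α) (f : Finset α → M)
    (h : ∀ T ∈ S.powerset, (∀ j ∈ S, T ≠ {j}) → f T = 0) :
    ∑ T ∈ S.powerset, f T = ∑ j ∈ S, f {j} := by
  have hinj : ∀ x ∈ S, ∀ y ∈ S, ({x} : Finset α) = {y} → x = y := by
    intro x _ y _ hxy; exact Finset.singleton_inj.mp hxy
  rw [← Finset.sum_image (g := fun j => ({j} : Finset α)) (f := f) hinj]
  refine (Finset.sum_subset ?_ ?_).symm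
  · intro T hT
    rw [Finset.mem_image] at hT
    obtain ⟨j, hj, rfl⟩ := hT
    rw [Finset.mem_powerset]
    exact Finset.singleton_subset_iff.mpr hj
  · intro T hT hT2
    refine h T hT fun j hj hTj => hT2 ?_
    rw [Finset.mem_image]
    exact ⟨j, hj, hTj.symm⟩

lemma sum_powerset_sdiff {α M : Type*} [DecidableEq α] [AddCommMonoid M]
    (S : Finset α) (f : Finset α → M) :
    ∑ T ∈ S.powerset, f T = ∑ T ∈ S.powerset, f (S \ T) := by
  refine Finset.sum_nbij' (fun T => S \ T) (fun T => S \ T) ?_ ?_ ?_ ?_ ?_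
  · intro T hT
    rw [Finset.mem_powerset] at *
    exact Finset.sdiff_subset
  · intro T hT
    rw [Finset.mem_powerset] at *
    exact Finset.sdiff_subset
  · intro T hT
    rw [Finset.mem_powerset] at hT
    exact Finset.sdiff_sdiff_eq_self hT
  · intro T hT
    rw [Finset.mem_powerset] at hT
    exact Finset.sdiff_sdiff_eq_self hT
  · intro T hT
    rw [Finset.mem_powerset] at hT
    rw [Finset.sdiff_sdiff_eq_self hT]

lemma shuffleSign_singleton (x y : Fin N) :
    shuffleSign ({x} : Finset (Fin N)) {y} = if y < x then -1 else 1 := by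
  unfold shuffleSign
  rw [Finset.singleton_product_singleton, Finset.filter_singleton]
  split_ifs <;> simp

lemma insSign_pair_left {a b : Fin N} (hab : a ≠ b) :
    insSign ({a, b} : Finset (Fin N)) a = if b < a then -1 else 1 := by
  unfold insSign
  rw [Finset.filter_insert, if_neg (lt_irrefl a), Finset.filter_singleton]
  split_ifs <;> simp

lemma insSign_pair_right {a b : Fin N} (hab : a ≠ b) :
    insSign ({a, b} : Finset (Fin N)) b = if a < b then -1 else 1 := by
  unfold insSign
  rw [Finset.filter_insert, Finset.filter_singleton, if_neg (lt_irrefl b)]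
  split_ifs <;> simp

lemma oydx_singleton (j : Fin (2 * n)) : oydxW n {j} = cWa n j := by
  funext m
  show (if m = 0 then _ else 0) = if m = 0 then cWc n j else 0
  split_ifs with hm
  · rw [Finset.sum_eq_single j]
    · rw [if_pos rfl]
      rfl
    · intro b _ hb
      rw [if_neg (fun h : ({j} : Finset (Fin (2*n))) = {b} =>
        hb (Finset.singleton_inj.mp h).symm)]
    · intro h; exact absurd (Finset.mem_univ j) h
  · rfl

lemma oydx_not_singleton (S : Finset (Fin (2 * n))) (h : ∀ j, S ≠ {j}) :
    oydxW n S = 0 := by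
  funext m
  show (if m = 0 then _ else 0) = 0
  split_ifs with hm
  · exact Finset.sum_eq_zero fun j _ => if_neg (h j)
  · rfl

/-- The 1-form `κ = (i/2) Σ ω_{ij} y^i dx^j`. -/
def kapF (n : ℕ) : WF n := fun S _ => (Complex.I / 2) • oydxW n S

lemma isForm_kapF : isForm 1 (kapF n) := by
  intro T hT
  funext x
  show (Complex.I / 2) • oydxW n T = 0
  rw [oydx_not_singleton T (fun j hj => hT (by rw [hj]; exact Finset.card_singleton j)),
    smul_zero]

lemma wmul_zero_left (b : Wa (2 * n)) : wmul (0 : Wa (2 * n)) b = 0 :=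
  wmulPi_zero_left _ _
lemma wmul_zero_right (a : Wa (2 * n)) : wmul a (0 : Wa (2 * n)) = 0 :=
  wmulPi_zero_right _ _
lemma wmul_add_left (a a' b : Wa (2 * n)) : wmul (a + a') b = wmul a b + wmul a' b :=
  wmulPi_add_left _ _ _ _
lemma wmul_add_right (a b b' : Wa (2 * n)) : wmul a (b + b') = wmul a b + wmul a b' :=
  wmulPi_add_right _ _ _ _
lemma wmul_smul_left (c : ℂ) (a b : Wa (2 * n)) : wmul (c • a) b = c • wmul a b :=
  wmulPi_smul_left _ _ _ _
lemma wmul_smul_right (c : ℂ) (a b : Wa (2 * n)) : wmul a (c • b) = c • wmul a b :=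
  wmulPi_smul_right _ _ _ _
lemma wmul_neg_left (a b : Wa (2 * n)) : wmul (-a) b = -wmul a b := by
  have h := wmul_add_left a (-a) b
  rw [add_neg_cancel, wmul_zero_left] at h
  linear_combination (norm := module) -h
lemma wmul_neg_right (a b : Wa (2 * n)) : wmul a (-b) = -wmul a b := by
  have h := wmul_add_right a b (-b)
  rw [add_neg_cancel, wmul_zero_right] at h
  linear_combination (norm := module) -h
lemma LwA_wmul (a b : Wa (2 * n)) : LwA (wmul a b) = wmul (LwA a) b + wmul a (LwA b) :=
  LwA_wmulPi _ _ _

lemma wMulF_form_ne {a b : WF n} {p q : ℕ} (ha : isForm p a) (hb : isForm q b)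
    {S : Finset (Fin (2 * n))} (hS : S.card ≠ p + q) (x : Pt n) : wMulF a b S x = 0 := by
  unfold wMulF
  refine Finset.sum_eq_zero fun T hT => ?_
  rw [Finset.mem_powerset] at hT
  by_cases hTc : T.card = p
  · have hcard : (S \ T).card = S.card - p := by rw [Finset.card_sdiff_of_subset hT, hTc]
    have hbz : b (S \ T) x = 0 := by
      rw [hb (S \ T) (by
        rw [hcard]
        have := Finset.card_le_card hT
        omega)]
      rfl
    rw [hbz, wmul_zero_right, smul_zero]
  · have haz : a T x = 0 := by rw [ha T hTc]; rfl
    rw [haz, wmul_zero_left, smul_zero]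

end Chunk4

section Chunk5
open Finset

variable {N n : ℕ}

lemma deltaW_add (a b : WF n) (S : Finset (Fin (2 * n))) (x : Pt n) :
    deltaW (a + b) S x = deltaW a S x + deltaW b S x := by
  unfold deltaW
  rw [← Finset.sum_add_distrib]
  refine Finset.sum_congr rfl fun i _ => ?_
  have h0 : (a + b) (S.erase i) x = a (S.erase i) x + b (S.erase i) x := rfl
  rw [h0, yDa_add, smul_add]

lemma deltaW_smul (c : ℂ) (a : WF n) (S : Finset (Fin (2 * n))) (x : Pt n) :
    deltaW (c • a) S x = c • deltaW a S x := by
  unfold deltaW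
  rw [Finset.smul_sum]
  refine Finset.sum_congr rfl fun i _ => ?_
  have h0 : (c • a) (S.erase i) x = c • a (S.erase i) x := rfl
  rw [h0, yDa_smul, smul_comm c]

lemma deltaW_neg (a : WF n) (S : Finset (Fin (2 * n))) (x : Pt n) :
    deltaW (-a) S x = -deltaW a S x := by
  unfold deltaW
  rw [← Finset.sum_neg_distrib]
  refine Finset.sum_congr rfl fun i _ => ?_
  have h0 : (-a) (S.erase i) x = -(a (S.erase i) x) := rfl
  rw [h0, yDa_neg, smul_neg]

lemma deltaW_LwF (r : WF n) (S : Finset (Fin (2 * n))) (x : Pt n) :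
    deltaW (fun T y => LwA (r T y)) S x
      = LwA (deltaW r S x) - (Complex.I / 2) • deltaW r S x := by
  unfold deltaW
  rw [LwA_sum, Finset.smul_sum, ← Finset.sum_sub_distrib]
  refine Finset.sum_congr rfl fun i _ => ?_
  rw [yDa_LwA, smul_sub, LwA_smul, smul_comm (insSign S i) (Complex.I / 2)]

lemma wc_coeff_smul (c : ℂ) (v : Wc N) (β : Fin N →₀ ℕ) :
    MvPowerSeries.coeff β (c • v) = c * MvPowerSeries.coeff β v := rfl

lemma C_eq_smul_one (c : ℂ) : MvPowerSeries.C (σ := Fin N) (R := ℂ) c = c • (1 : Wc N) := by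
  apply wc_ext; intro β
  rw [MvPowerSeries.coeff_C, map_smul, MvPowerSeries.coeff_one, smul_eq_mul]
  split_ifs <;> simp

lemma pair_eq_cases {a b i j : Fin N} (hab : a ≠ b)
    (h : ({a, b} : Finset (Fin N)) = {i, j}) : (i = a ∧ j = b) ∨ (i = b ∧ j = a) := by
  have hi : i ∈ ({a, b} : Finset (Fin N)) := by rw [h]; exact Finset.mem_insert_self i {j}
  have hj : j ∈ ({a, b} : Finset (Fin N)) := by rw [h]; simp
  have ha : a ∈ ({i, j} : Finset (Fin N)) := by rw [← h]; simp
  have hb : b ∈ ({i, j} : Finset (Fin N)) := by rw [← h]; simp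
  simp only [Finset.mem_insert, Finset.mem_singleton] at hi hj ha hb
  rcases hi with h1 | h1
  · left
    refine ⟨h1, ?_⟩
    rcases hb with h2 | h2
    · exact absurd (h2.trans h1) (Ne.symm hab)
    · exact h2.symm
  · right
    refine ⟨h1, ?_⟩
    rcases ha with h2 | h2
    · exact absurd (h2.trans h1) hab
    · exact h2.symm

lemma omega_pair_sum {a b : Fin (2 * n)} (hab : a ≠ b) :
    (∑ i, ∑ j', if i < j' ∧ ({a, b} : Finset (Fin (2 * n))) = {i, j'}
        then stdOmega n i j' else 0)
      = if a < b then stdOmega n a b else stdOmega n b a := by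
  rcases lt_or_gt_of_ne hab with hlt | hgt
  · rw [if_pos hlt, Finset.sum_eq_single a]
    · rw [Finset.sum_eq_single b]
      · rw [if_pos ⟨hlt, rfl⟩]
      · intro j' _ hj'
        refine if_neg fun hc => ?_
        rcases pair_eq_cases hab hc.2 with ⟨h1, h2⟩ | ⟨h1, h2⟩
        · exact hj' h2
        · exact hab h1
      · intro h; exact absurd (Finset.mem_univ b) h
    · intro i _ hi
      refine Finset.sum_eq_zero fun j' _ => if_neg fun hc => ?_
      rcases pair_eq_cases hab hc.2 with ⟨h1, h2⟩ | ⟨h1, h2⟩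
      · exact hi h1
      · subst h1; subst h2; exact absurd hc.1 (asymm hlt)
    · intro h; exact absurd (Finset.mem_univ a) h
  · rw [if_neg (asymm hgt), Finset.sum_eq_single b]
    · rw [Finset.sum_eq_single a]
      · rw [if_pos ⟨hgt, Finset.pair_comm a b⟩]
      · intro j' _ hj'
        refine if_neg fun hc => ?_
        rcases pair_eq_cases hab hc.2 with ⟨h1, h2⟩ | ⟨h1, h2⟩
        · subst h1; subst h2; exact absurd hc.1 (asymm hgt)
        · exact hj' h2
      · intro h; exact absurd (Finset.mem_univ a) h
    · intro i _ hi
      refine Finset.sum_eq_zero fun j' _ => if_neg fun hc => ?_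
      rcases pair_eq_cases hab hc.2 with ⟨h1, h2⟩ | ⟨h1, h2⟩
      · subst h1; subst h2; exact absurd hc.1 (asymm hgt)
      · exact hi h1
    · intro h; exact absurd (Finset.mem_univ b) h

lemma omegaF_zero_of_card (S : Finset (Fin (2 * n))) (h2 : S.card ≠ 2) (x : Pt n) :
    omegaF n S x = 0 := by
  funext m
  show (if m = 0 then _ else 0) = 0
  split_ifs with hm
  · rw [show (∑ i, ∑ j', if i < j' ∧ S = {i, j'} then stdOmega n i j' else 0) = 0 from
      Finset.sum_eq_zero fun i _ => Finset.sum_eq_zero fun j' _ => if_neg fun hc =>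
        h2 (by rw [hc.2]; exact Finset.card_pair (ne_of_lt hc.1)), map_zero]
  · rfl

lemma deltaW_kapF (S : Finset (Fin (2 * n))) (x : Pt n) :
    deltaW (kapF n) S x = Complex.I • omegaF n S x := by
  by_cases h2 : S.card = 2
  · obtain ⟨a, b, hab, rfl⟩ := Finset.card_eq_two.mp h2
    have hna : a ∉ ({b} : Finset (Fin (2 * n))) := by simp [hab]
    have heb : ({a, b} : Finset (Fin (2 * n))).erase a = {b} := Finset.erase_insert hna
    have hea : ({a, b} : Finset (Fin (2 * n))).erase b = {a} := by
      rw [Finset.pair_comm]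
      exact Finset.erase_insert (by simp [Ne.symm hab])
    unfold deltaW
    rw [Finset.sum_insert hna, Finset.sum_singleton, heb, hea]
    have hkb : kapF n {b} x = (Complex.I / 2) • cWa n b := by
      show (Complex.I / 2) • oydxW n {b} = _
      rw [oydx_singleton]
    have hka : kapF n {a} x = (Complex.I / 2) • cWa n a := by
      show (Complex.I / 2) • oydxW n {a} = _
      rw [oydx_singleton]
    have hyd : ∀ i j : Fin (2 * n), yDa i (cWa n j)
        = (fun m => if m = 0 then stdOmega n i j • 1 else 0 : Wa (2 * n)) := by
      intro i j; funext m
      show yD i (if m = 0 then cWc n j else 0) = _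
      split_ifs with hm
      · exact yD_cWc i j
      · exact yD_zero i
    rw [hkb, hka, yDa_smul, yDa_smul, hyd, hyd]
    funext m
    have homega : omegaF n {a, b} x m
        = if m = 0 then MvPowerSeries.C (σ := Fin (2 * n)) (R := ℂ)
            (∑ i, ∑ j', if i < j' ∧ ({a, b} : Finset (Fin (2 * n))) = {i, j'}
              then stdOmega n i j' else 0) else 0 := rfl
    show insSign {a, b} a • ((Complex.I / 2) •
        (if m = 0 then stdOmega n a b • (1 : Wc (2 * n)) else 0))
      + insSign {a, b} b • ((Complex.I / 2) •
        (if m = 0 then stdOmega n b a • (1 : Wc (2 * n)) else 0))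
      = Complex.I • omegaF n {a, b} x m
    rw [homega, omega_pair_sum hab]
    cases m with
    | succ m' => simp
    | zero =>
        simp only [reduceIte]
        apply wc_ext; intro β
        rw [insSign_pair_left hab, insSign_pair_right hab, stdOmega_antisymm b a]
        rcases lt_or_gt_of_ne hab with hlt | hgt
        · rw [if_neg (asymm hlt), if_pos hlt]
          simp only [map_add, wc_coeff_smul, MvPowerSeries.coeff_C,
            MvPowerSeries.coeff_one, smul_eq_mul]
          split_ifs <;> ring
        · rw [if_pos hgt, if_neg (asymm hgt)]
          simp only [map_add, wc_coeff_smul, MvPowerSeries.coeff_C,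
            MvPowerSeries.coeff_one, smul_eq_mul]
          split_ifs <;> try ring
          all_goals (exfalso; exact absurd (by assumption : a < b) (asymm hgt))
  · have hL : deltaW (kapF n) S x = 0 := by
      unfold deltaW
      refine Finset.sum_eq_zero fun i hi => ?_
      have hk : kapF n (S.erase i) x = 0 := by
        show (Complex.I / 2) • oydxW n (S.erase i) = 0
        rw [oydx_not_singleton, smul_zero]
        intro j hj
        apply h2
        have hc := congrArg Finset.card hj
        rw [Finset.card_erase_of_mem hi, Finset.card_singleton] at hc
        have h1 : 1 ≤ S.card := Finset.card_pos.mpr ⟨i, hi⟩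
        omega
      rw [hk, yDa_zero, smul_zero]
    rw [hL, omegaF_zero_of_card S h2 x, smul_zero]

end Chunk5

section Chunk6
open Finset

variable {N n : ℕ}

lemma wMulF_add_right (a b b' : WF n) (S : Finset (Fin (2 * n))) (x : Pt n) :
    wMulF a (b + b') S x = wMulF a b S x + wMulF a b' S x := by
  unfold wMulF
  rw [← Finset.sum_add_distrib]
  refine Finset.sum_congr rfl fun T _ => ?_
  have h0 : (b + b') (S \ T) x = b (S \ T) x + b' (S \ T) x := rfl
  rw [h0, wmul_add_right, smul_add]

lemma wMulF_add_left (a a' b : WF n) (S : Finset (Fin (2 * n))) (x : Pt n) :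
    wMulF (a + a') b S x = wMulF a b S x + wMulF a' b S x := by
  unfold wMulF
  rw [← Finset.sum_add_distrib]
  refine Finset.sum_congr rfl fun T _ => ?_
  have h0 : (a + a') T x = a T x + a' T x := rfl
  rw [h0, wmul_add_left, smul_add]

lemma wMulF_smul_right (c : ℂ) (a b : WF n) (S : Finset (Fin (2 * n))) (x : Pt n) :
    wMulF a (c • b) S x = c • wMulF a b S x := by
  unfold wMulF
  rw [Finset.smul_sum]
  refine Finset.sum_congr rfl fun T _ => ?_
  have h0 : (c • b) (S \ T) x = c • b (S \ T) x := rfl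
  rw [h0, wmul_smul_right, smul_comm _ c]

lemma wMulF_smul_left (c : ℂ) (a b : WF n) (S : Finset (Fin (2 * n))) (x : Pt n) :
    wMulF (c • a) b S x = c • wMulF a b S x := by
  unfold wMulF
  rw [Finset.smul_sum]
  refine Finset.sum_congr rfl fun T _ => ?_
  have h0 : (c • a) T x = c • a T x := rfl
  rw [h0, wmul_smul_left, smul_comm _ c]

lemma wMulF_neg_right (a b : WF n) (S : Finset (Fin (2 * n))) (x : Pt n) :
    wMulF a (-b) S x = -wMulF a b S x := by
  unfold wMulF
  rw [← Finset.sum_neg_distrib]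
  refine Finset.sum_congr rfl fun T _ => ?_
  have h0 : (-b) (S \ T) x = -(b (S \ T) x) := rfl
  rw [h0, wmul_neg_right, smul_neg]

lemma wMulF_neg_left (a b : WF n) (S : Finset (Fin (2 * n))) (x : Pt n) :
    wMulF (-a) b S x = -wMulF a b S x := by
  unfold wMulF
  rw [← Finset.sum_neg_distrib]
  refine Finset.sum_congr rfl fun T _ => ?_
  have h0 : (-a) T x = -(a T x) := rfl
  rw [h0, wmul_neg_left, smul_neg]

lemma hInv_sub (u v : Wa N) : hInv (u - v) = hInv u - hInv v := rfl

lemma comm1_add (r a b : WF n) (S : Finset (Fin (2 * n))) (x : Pt n) :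
    comm1 r (a + b) S x = comm1 r a S x + comm1 r b S x := by
  unfold comm1
  rw [wMulF_add_right, wMulF_add_left, smul_add]
  abel

lemma comm1_smul (c : ℂ) (r a : WF n) (S : Finset (Fin (2 * n))) (x : Pt n) :
    comm1 r (c • a) S x = c • comm1 r a S x := by
  unfold comm1
  rw [wMulF_smul_right, wMulF_smul_left, smul_comm _ c, smul_sub]

lemma comm1_neg (r a : WF n) (S : Finset (Fin (2 * n))) (x : Pt n) :
    comm1 r (-a) S x = -comm1 r a S x := by
  unfold comm1
  rw [wMulF_neg_right, wMulF_neg_left, smul_neg]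
  abel

lemma deltaW_zero_of_form {r : WF n} (hr : isForm 1 r) {S : Finset (Fin (2 * n))}
    (h2 : S.card ≠ 2) (x : Pt n) : deltaW r S x = 0 := by
  unfold deltaW
  refine Finset.sum_eq_zero fun i hi => ?_
  have h0 : r (S.erase i) x = 0 := by
    rw [hr (S.erase i) (by
      rw [Finset.card_erase_of_mem hi]
      have h1 := Finset.card_pos.mpr ⟨i, hi⟩
      omega)]
    rfl
  rw [h0, yDa_zero, smul_zero]

lemma comm1_self {r : WF n} (hr : isForm 1 r) (S : Finset (Fin (2 * n))) (x : Pt n) :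
    comm1 r r S x = (2 : ℂ) • wMulF r r S x := by
  by_cases h2 : S.card = 2
  · unfold comm1
    rw [h2, show ((-1 : ℂ)) ^ (2 - 1) = -1 from by norm_num]
    module
  · unfold comm1
    rw [wMulF_form_ne hr hr (by omega) x, smul_zero, sub_zero, smul_zero]

lemma comm1_LwF {r : WF n} (hr : isForm 1 r) (S : Finset (Fin (2 * n))) (x : Pt n) :
    comm1 r (fun T y => LwA (r T y)) S x = LwA (wMulF r r S x) := by
  have hA : isForm 1 (fun T y => LwA (r T y)) := by
    intro T hT
    funext y
    have h0 : r T y = 0 := by rw [hr T hT]; rfl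
    show LwA (r T y) = 0
    rw [h0, LwA_zero]
  by_cases h2 : S.card = 2
  · unfold comm1
    rw [h2, show ((-1 : ℂ)) ^ (2 - 1) = -1 from by norm_num]
    have hder : LwA (wMulF r r S x) = wMulF (fun T y => LwA (r T y)) r S x
        + wMulF r (fun T y => LwA (r T y)) S x := by
      unfold wMulF
      rw [LwA_sum, ← Finset.sum_add_distrib]
      refine Finset.sum_congr rfl fun T _ => ?_
      rw [LwA_smul, LwA_wmul, smul_add]
    rw [hder]
    module
  · have hq : wMulF r r S x = 0 := wMulF_form_ne hr hr (by omega) x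
    unfold comm1
    rw [wMulF_form_ne hr hA (by omega) x, wMulF_form_ne hA hr (by omega) x, hq, LwA_zero,
      smul_zero, sub_zero]

lemma shuffleSign_singleton_swap {x y : Fin N} (h : x ≠ y) :
    shuffleSign ({y} : Finset (Fin N)) {x} = -shuffleSign ({x} : Finset (Fin N)) {y} := by
  rw [shuffleSign_singleton, shuffleSign_singleton]
  rcases lt_or_gt_of_ne h with h1 | h1
  · rw [if_pos h1, if_neg (asymm h1)]; try norm_num
  · rw [if_neg (asymm h1), if_pos h1]; try norm_num

lemma comm1_kapF {r : WF n} (hr : isForm 1 r) (S : Finset (Fin (2 * n))) (x : Pt n) :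
    Complex.I • hInv (comm1 r (kapF n) S x) = -((Complex.I / 2) • deltaW r S x) := by
  by_cases h2 : S.card = 2
  · obtain ⟨a, b, hab, rfl⟩ := Finset.card_eq_two.mp h2
    have hna : a ∉ ({b} : Finset (Fin (2 * n))) := by simp [hab]
    have heb : ({a, b} : Finset (Fin (2 * n))).erase a = {b} := Finset.erase_insert hna
    have hea : ({a, b} : Finset (Fin (2 * n))).erase b = {a} := by
      rw [Finset.pair_comm]
      exact Finset.erase_insert (by simp [Ne.symm hab])
    have hsa : ({a, b} : Finset (Fin (2 * n))) \ {a} = {b} := by rw [← Finset.erase_eq]; exact heb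
    have hsb : ({a, b} : Finset (Fin (2 * n))) \ {b} = {a} := by rw [← Finset.erase_eq]; exact hea
    have hkap : ∀ j : Fin (2 * n), kapF n {j} x = (Complex.I / 2) • cWa n j := by
      intro j
      show (Complex.I / 2) • oydxW n {j} = _
      rw [oydx_singleton]
    have hkapz : ∀ T ∈ ({a, b} : Finset (Fin (2 * n))).powerset,
        (∀ j ∈ ({a, b} : Finset (Fin (2 * n))), T ≠ {j}) → kapF n T x = 0 := by
      intro T hT hTj
      show (Complex.I / 2) • oydxW n T = 0
      rw [oydx_not_singleton T, smul_zero]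
      intro j hj
      refine hTj j ?_ hj
      rw [Finset.mem_powerset] at hT
      exact hT (hj ▸ Finset.mem_singleton_self j)
    have h1 : wMulF (kapF n) r ({a, b} : Finset (Fin (2 * n))) x
        = ∑ j ∈ ({a, b} : Finset (Fin (2 * n))),
            shuffleSign {j} (({a, b} : Finset (Fin (2 * n))) \ {j}) •
              ((Complex.I / 2) • wmul (cWa n j) (r (({a, b} : Finset (Fin (2 * n))) \ {j}) x)) := by
      unfold wMulF
      rw [sum_powerset_singletons _ _ (fun T hT hTj => by
        rw [hkapz T hT hTj, wmul_zero_left, smul_zero])]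
      refine Finset.sum_congr rfl fun j hj => ?_
      rw [hkap j, wmul_smul_left]
    have h1' : wMulF r (kapF n) ({a, b} : Finset (Fin (2 * n))) x
        = ∑ j ∈ ({a, b} : Finset (Fin (2 * n))),
            shuffleSign (({a, b} : Finset (Fin (2 * n))) \ {j}) {j} •
              ((Complex.I / 2) • wmul (r (({a, b} : Finset (Fin (2 * n))) \ {j}) x) (cWa n j)) := by
      unfold wMulF
      rw [sum_powerset_sdiff]
      rw [Finset.sum_congr rfl (fun T hT => by
        rw [Finset.sdiff_sdiff_eq_self (Finset.mem_powerset.mp hT)])]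
      rw [sum_powerset_singletons _ _ (fun T hT hTj => by
        rw [hkapz T hT hTj, wmul_zero_right, smul_zero])]
      refine Finset.sum_congr rfl fun j hj => ?_
      rw [hkap j, wmul_smul_right]
    have hcomm : comm1 r (kapF n) ({a, b} : Finset (Fin (2 * n))) x
        = shuffleSign ({b} : Finset (Fin (2 * n))) {a} •
            ((Complex.I / 2) • wmul (r {b} x) (cWa n a))
          + shuffleSign ({a} : Finset (Fin (2 * n))) {b} •
            ((Complex.I / 2) • wmul (r {a} x) (cWa n b))
          + (shuffleSign ({a} : Finset (Fin (2 * n))) {b} •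
              ((Complex.I / 2) • wmul (cWa n a) (r {b} x))
            + shuffleSign ({b} : Finset (Fin (2 * n))) {a} •
              ((Complex.I / 2) • wmul (cWa n b) (r {a} x))) := by
      unfold comm1
      rw [h1, h1', Finset.card_pair hab,
        show ((-1 : ℂ)) ^ (2 - 1) = -1 from by norm_num,
        Finset.sum_insert hna, Finset.sum_singleton, Finset.sum_insert hna,
        Finset.sum_singleton, hsa, hsb]
      module
    rw [hcomm]
    have hrc : ∀ (j : Fin (2 * n)) (u : Wa (2 * n)),
        wmul u (cWa n j) = wmul (cWa n j) u - Complex.I • hM (yDa j u) := by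
      intro j u
      have h := wmul_cWa_comm j u
      linear_combination (norm := module) -h
    rw [hrc a (r {b} x), hrc b (r {a} x)]
    have hdel : deltaW r ({a, b} : Finset (Fin (2 * n))) x
        = insSign {a, b} a • yDa a (r {b} x) + insSign {a, b} b • yDa b (r {a} x) := by
      unfold deltaW
      rw [Finset.sum_insert hna, Finset.sum_singleton, heb, hea]
    rw [hdel, insSign_pair_left hab, insSign_pair_right hab,
      ← shuffleSign_singleton a b, ← shuffleSign_singleton b a,
      shuffleSign_singleton_swap hab]
    simp only [hInv_add, hInv_sub, hInv_smul, hInv_neg, hInv_hM, smul_add, smul_sub, smul_neg]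
    have hI3 : Complex.I ^ 3 = -Complex.I := by
      rw [show (3 : ℕ) = 2 + 1 from rfl, pow_succ, Complex.I_sq]
      ring
    match_scalars
    all_goals try ring
    all_goals first | (linear_combination (Complex.I * shuffleSign ({a} : Finset (Fin (2*n))) {b} * (1/2)) * Complex.I_sq) | (linear_combination (Complex.I * shuffleSign ({a} : Finset (Fin (2*n))) {b} * (-1/2)) * Complex.I_sq)
  · have hz1 : wMulF r (kapF n) S x = 0 := wMulF_form_ne hr isForm_kapF (by omega) x
    have hz2 : wMulF (kapF n) r S x = 0 := wMulF_form_ne isForm_kapF hr (by omega) x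
    have hδ : deltaW r S x = 0 := deltaW_zero_of_form hr h2 x
    unfold comm1
    rw [hz1, hz2, smul_zero, sub_zero, hδ, smul_zero, neg_zero]
    rw [hInv_zero, smul_zero]

end Chunk6

section Chunk7
open Finset

variable {N n : ℕ}

lemma coeff_xD (i : Fin (2 * n)) (f : Pt n → Wa (2 * n)) (x : Pt n) (m : ℕ)
    (β : Fin (2 * n) →₀ ℕ) :
    MvPowerSeries.coeff β (xD i f x m)
      = fderiv ℝ (fun x' => MvPowerSeries.coeff β (f x' m)) x (Pi.single i 1) := rfl

lemma xD_K0 {r : WF n} (hrs : WF.Smooth r) (i : Fin (2 * n)) (S' : Finset (Fin (2 * n)))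
    (x : Pt n) :
    xD i (K0 r S') x = -(LwA (xD i (r S') x)) - Complex.I • xD i (r S') x := by
  funext m
  apply wc_ext
  intro β
  set c1 : ℂ := -(-Complex.I / 2 * (∑ t : Fin (2 * n), (β t : ℂ)) - (m : ℂ) * Complex.I
    + Complex.I) with hc1
  have hfun : (fun x' => MvPowerSeries.coeff β (K0 r S' x' m))
      = fun x' => c1 * MvPowerSeries.coeff β (r S' x' m)
          + (-(MvPowerSeries.coeff β (((Complex.I / 2) • oydxW n S') m))) := by
    funext x'
    have h0 : K0 r S' x' m
        = -(EulW (r S' x' m) - ((m : ℂ) * Complex.I) • (r S' x' m)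
            + Complex.I • (r S' x' m) + ((Complex.I / 2) • oydxW n S') m) := by
      show (-(EulWa (r S' x') - Complex.I • hM (hD (r S' x')) + Complex.I • r S' x'
          + (Complex.I / 2) • oydxW n S')) m = _
      rw [Pi.neg_apply, Pi.add_apply, Pi.add_apply, Pi.sub_apply, Pi.smul_apply,
        Pi.smul_apply, hM_hD_apply, smul_smul]
      have he : EulWa (r S' x') m = EulW (r S' x' m) := rfl
      rw [he]
      module
    rw [h0, map_neg, map_add, map_add, map_sub, wc_coeff_smul, wc_coeff_smul, coeff_EulW,
      hc1]
    ring
  rw [coeff_xD, hfun]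
  have hdiff : DifferentiableAt ℝ (fun x' => MvPowerSeries.coeff β (r S' x' m)) x :=
    ((hrs S' m β).differentiable (by simp)).differentiableAt
  rw [fderiv_add_const, fderiv_const_mul hdiff]
  have hL : (c1 • fderiv ℝ (fun x' => MvPowerSeries.coeff β (r S' x' m)) x) (Pi.single i 1)
      = c1 * fderiv ℝ (fun x' => MvPowerSeries.coeff β (r S' x' m)) x (Pi.single i 1) := rfl
  rw [hL]
  have hR : MvPowerSeries.coeff β ((-(LwA (xD i (r S') x)) - Complex.I • xD i (r S') x) m)
      = -(MvPowerSeries.coeff β (LwA (xD i (r S') x) m))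
        - Complex.I * MvPowerSeries.coeff β (xD i (r S') x m) := by
    rw [show (-(LwA (xD i (r S') x)) - Complex.I • xD i (r S') x) m
      = -(LwA (xD i (r S') x) m) - Complex.I • (xD i (r S') x m) from rfl, map_sub, map_neg,
      wc_coeff_smul]
  rw [hR, LwA_apply, map_sub, wc_coeff_smul, coeff_EulW, coeff_xD, hc1]
  ring

lemma extD_K0 {r : WF n} (hrs : WF.Smooth r) (S : Finset (Fin (2 * n))) (x : Pt n) :
    extD (K0 r) S x = -(LwA (extD r S x)) - Complex.I • extD r S x := by
  unfold extD
  rw [Finset.sum_congr rfl (fun i (hi : i ∈ S) => by rw [xD_K0 hrs i (S.erase i) x])]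
  have h1 : ∀ i ∈ S, insSign S i • (-(LwA (xD i (r (S.erase i)) x))
        - Complex.I • xD i (r (S.erase i)) x)
      = -(LwA (insSign S i • xD i (r (S.erase i)) x))
        - Complex.I • (insSign S i • xD i (r (S.erase i)) x) := by
    intro i _
    rw [LwA_smul, smul_sub, smul_neg, smul_comm _ Complex.I]
  rw [Finset.sum_congr rfl h1, Finset.sum_sub_distrib, Finset.sum_neg_distrib, ← LwA_sum,
    ← Finset.smul_sum]

lemma LwA_omegaF (S : Finset (Fin (2 * n))) (x : Pt n) : LwA (omegaF n S x) = 0 := by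
  funext m
  rw [LwA_apply, Pi.zero_apply]
  cases m with
  | zero =>
      have h0 : omegaF n S x 0 = MvPowerSeries.C (σ := Fin (2 * n)) (R := ℂ)
          (∑ i, ∑ j, if i < j ∧ S = {i, j} then stdOmega n i j else 0) := rfl
      rw [h0, EulW_C]
      norm_num
  | succ m' =>
      have h0 : omegaF n S x (m' + 1) = 0 := if_neg (Nat.succ_ne_zero m')
      rw [h0, EulW_zero, smul_zero, sub_zero]

lemma EulWa_scalar {a : WF n} (ha : isScalar a) (S : Finset (Fin (2 * n))) (x : Pt n) :
    EulWa (a S x) = 0 := by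
  funext m
  apply wc_ext
  intro β
  show MvPowerSeries.coeff β (EulW (a S x m)) = MvPowerSeries.coeff β ((0 : Wa (2 * n)) m)
  rw [coeff_EulW, show ((0 : Wa (2 * n)) m) = 0 from rfl, map_zero]
  by_cases hβ : β = 0
  · subst hβ
    simp
  · rw [ha S x m β hβ, mul_zero]

end Chunk7

/-- If `D = −δ + d + (i/ℏ)[r,·]` is Abelian with Weyl curvature
`Ω = ω + δr − dr − (i/ℏ) r⋆r ∈ Ω²(ℝ^{2n},ℂ)[[ℏ]]`, then with
`K₀ = −(Er − iℏ ∂r/∂ℏ + i r + (i/2) Σ ω_{ij} y^i dx^j)` one has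
`D K₀ = i(Ω − ℏ ∂Ω/∂ℏ) = −iℏ² ∂(ℏ⁻¹Ω)/∂ℏ`. -/
theorem D_K0_eq_curvature_derivative (n : ℕ) (r : WF n)
    (hr : isForm 1 r) (hrs : WF.Smooth r) (hab : isScalar (curv r)) :
    fedD r (K0 r) = fun S x => Complex.I • (curv r S x - hM (hD (curv r S x))) := by
  funext S x
  have hK : K0 r = -((fun T y => LwA (r T y)) + Complex.I • r + kapF n) := rfl
  show -deltaW (K0 r) S x + extD (K0 r) S x + Complex.I • hInv (comm1 r (K0 r) S x)
    = Complex.I • (curv r S x - hM (hD (curv r S x)))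
  have hdelta : deltaW (K0 r) S x
      = -(LwA (deltaW r S x) - (Complex.I / 2) • deltaW r S x
          + Complex.I • deltaW r S x + Complex.I • omegaF n S x) := by
    rw [hK, deltaW_neg, deltaW_add, deltaW_add, deltaW_smul, deltaW_LwF, deltaW_kapF]
  have hext := extD_K0 hrs S x
  have hcomm : comm1 r (K0 r) S x
      = -(LwA (wMulF r r S x) + Complex.I • ((2 : ℂ) • wMulF r r S x)
          + comm1 r (kapF n) S x) := by
    rw [hK, comm1_neg, comm1_add, comm1_add, comm1_smul, comm1_LwF hr, comm1_self hr]
  rw [hdelta, hext, hcomm]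
  have hbrk : Complex.I • hInv (-(LwA (wMulF r r S x)
        + Complex.I • ((2 : ℂ) • wMulF r r S x) + comm1 r (kapF n) S x))
      = -(Complex.I • (LwA (hInv (wMulF r r S x)) - Complex.I • hInv (wMulF r r S x)))
        - Complex.I • (Complex.I • ((2 : ℂ) • hInv (wMulF r r S x)))
        - Complex.I • hInv (comm1 r (kapF n) S x) := by
    rw [hInv_neg, hInv_add, hInv_add, hInv_smul, hInv_smul, hInv_LwA]
    module
  rw [hbrk, comm1_kapF hr]
  have hOm : curv r S x = omegaF n S x + deltaW r S x - extD r S x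
      - Complex.I • hInv (wMulF r r S x) := rfl
  have hEul : EulWa (curv r S x) = 0 := EulWa_scalar hab S x
  have hhm : Complex.I • hM (hD (curv r S x)) = EulWa (curv r S x) - LwA (curv r S x) := by
    show _ = EulWa (curv r S x)
      - (EulWa (curv r S x) - Complex.I • hM (hD (curv r S x)))
    abel
  have hLwOm : LwA (curv r S x) = LwA (deltaW r S x) - LwA (extD r S x)
      - Complex.I • LwA (hInv (wMulF r r S x)) := by
    rw [hOm, LwA_sub, LwA_sub, LwA_add, LwA_smul, LwA_omegaF, zero_add]
  rw [show Complex.I • (curv r S x - hM (hD (curv r S x)))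
      = Complex.I • curv r S x - Complex.I • hM (hD (curv r S x)) from smul_sub _ _ _]
  rw [hhm, hEul, hLwOm, zero_sub, hOm]
  match_scalars
  all_goals first | ring | (rw [Complex.I_sq]; ring) | (rw [show (3 : ℕ) = 2 + 1 from rfl, pow_succ, Complex.I_sq]; ring)


end StarPaper
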